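/- arXiv:1911.03506 — 8 statements merged into one kernel-verified Lean document; each statement's English description precedes it below -/
import Mathlib

section
/- Let 0 ≤ β < α ≤ 1, let ω_α ∈ M_α and ω_β ∈ M_β with ω_α(t) > 0 for t > 0. Then there exists a constant K > 0, depending only on ω_α and ω_β, such that for every natural number n ≥ 1, Σ_{k=1}^{n} ω_β(2^{−k})/ω_α(2^{−k}) ≤ K·ω_β(2^{−n})/ω_α(2^{−n}). -/
/-- A modulus of continuity: continuous, nondecreasing, subadditive on `[0,∞)`,
vanishing at `0`. -/
def IsModulus (ω : ℝ → ℝ) : Prop :=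
  ContinuousOn ω (Set.Ici 0) ∧ ω 0 = 0 ∧
  (∀ s t : ℝ, 0 ≤ s → s ≤ t → ω s ≤ ω t) ∧
  (∀ s t : ℝ, 0 ≤ s → 0 ≤ t → ω (s + t) ≤ ω s + ω t)

/-- Leindler's class `M_α` of moduli of continuity. -/
def MemMClass (α : ℝ) (ω : ℝ → ℝ) : Prop :=
  IsModulus ω ∧
  (∀ α' : ℝ, α < α' → ∃ μ : ℕ, 1 ≤ μ ∧ ∀ n : ℕ, 1 ≤ n →
    2 * ω (1 / 2 ^ n) < (2:ℝ) ^ ((μ:ℝ) * α') * ω (1 / 2 ^ (n + μ))) ∧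
  (∀ ν : ℕ, 1 ≤ ν → ∃ N : ℕ, ∀ n : ℕ, N < n →
    (2:ℝ) ^ ((ν:ℝ) * α) * ω (1 / 2 ^ (n + ν)) < 2 * ω (1 / 2 ^ n))

/-- Lemma 1, (4.1). For `0 ≤ β < α ≤ 1`, `ω_α ∈ M_α`,
`ω_β ∈ M_β` with `ω_α` positive on positives:
`Σ_{k=1}^n ω_β(2^{-k})/ω_α(2^{-k}) ≤ K ω_β(2^{-n})/ω_α(2^{-n})`. -/
theorem leindler_sum_bound_increasing
    (α β : ℝ) (hβ : 0 ≤ β) (hβα : β < α) (hα : α ≤ 1)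
    (ωα ωβ : ℝ → ℝ) (hωα : MemMClass α ωα) (hωβ : MemMClass β ωβ)
    (hωαpos : ∀ t : ℝ, 0 < t → 0 < ωα t) :
    ∃ K : ℝ, 0 < K ∧ ∀ n : ℕ, 1 ≤ n →
      ∑ k ∈ Finset.Icc 1 n, ωβ (1 / 2 ^ k) / ωα (1 / 2 ^ k) ≤
        K * (ωβ (1 / 2 ^ n) / ωα (1 / 2 ^ n)) := by
  obtain ⟨⟨_, hza, hmona, hsuba⟩, hia, hiia⟩ := hωα
  obtain ⟨⟨_, hzb, hmonb, hsubb⟩, hib, hiib⟩ := hωβ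
  have hββ' : β < (β + α) / 2 := by linarith
  have hβ'α : (β + α) / 2 < α := by linarith
  set β' : ℝ := (β + α) / 2 with hβ'def
  obtain ⟨μ, hμ1, Hμ⟩ := hib β' hββ'
  obtain ⟨N, HN⟩ := hiia μ hμ1
  have hμR : (1:ℝ) ≤ (μ:ℝ) := by exact_mod_cast hμ1
  set p : ℕ → ℝ := fun k => 1 / 2 ^ k with hp
  have hppos : ∀ k, 0 < p k := fun k => by simp only [hp]; positivity
  have hpmono : ∀ k l : ℕ, k ≤ l → p l ≤ p k := by
    intro k l h
    simp only [hp]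
    apply one_div_le_one_div_of_le (by positivity)
    exact pow_le_pow_right₀ (by norm_num) h
  set r : ℕ → ℝ := fun k => ωβ (p k) / ωα (p k) with hrdef
  have hapos : ∀ k, 0 < ωα (p k) := fun k => hωαpos _ (hppos k)
  have hbnn : ∀ t : ℝ, 0 ≤ t → 0 ≤ ωβ t := by
    intro t ht
    have := hmonb 0 t le_rfl ht
    rw [hzb] at this; exact this
  have hbpos : ∀ k, 1 ≤ k → 0 < ωβ (p k) := by
    intro k hk
    have h1 := Hμ k hk
    have h2 : 0 ≤ ωβ (1 / 2 ^ k) := hbnn _ (by positivity)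
    have h3 : 0 < ωβ (1 / 2 ^ (k + μ)) := by
      by_contra h
      push_neg at h
      have hP : (0:ℝ) < (2:ℝ) ^ ((μ:ℝ) * β') := Real.rpow_pos_of_pos (by norm_num) _
      nlinarith
    calc (0:ℝ) < ωβ (1 / 2 ^ (k + μ)) := h3
      _ ≤ ωβ (p k) := hmonb _ _ (by positivity)
          (hpmono k (k + μ) (Nat.le_add_right _ _))
  have hrnn : ∀ k, 0 ≤ r k := fun k =>
    div_nonneg (hbnn _ (hppos k).le) (hapos k).le
  have hrpos : ∀ k, 1 ≤ k → 0 < r k := fun k hk =>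
    div_pos (hbpos k hk) (hapos k)
  -- doubling growth for ωβ
  have hgrowb : ∀ k d : ℕ, ωβ (p k) ≤ 2 ^ d * ωβ (p (k + d)) := by
    intro k d
    induction d with
    | zero => simp
    | succ d ihd =>
      have key : ωβ (p (k + d)) ≤ 2 * ωβ (p (k + d + 1)) := by
        have hsub := hsubb (p (k + d + 1)) (p (k + d + 1)) (hppos _).le (hppos _).le
        have heq : p (k + d) = p (k + d + 1) + p (k + d + 1) := by
          simp only [hp]
          rw [pow_succ]
          field_simp
          ring
        rw [heq]; linarith
      calc ωβ (p k) ≤ 2 ^ d * ωβ (p (k + d)) := ihd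
        _ ≤ 2 ^ d * (2 * ωβ (p (k + d + 1))) :=
            mul_le_mul_of_nonneg_left key (by positivity)
        _ = 2 ^ (d + 1) * ωβ (p (k + (d + 1))) := by rw [pow_succ]; ring_nf
  have hr_le : ∀ k d : ℕ, r k ≤ 2 ^ d * r (k + d) := by
    intro k d
    have h1 : ωβ (p k) ≤ 2 ^ d * ωβ (p (k + d)) := hgrowb k d
    have h2 : ωα (p (k + d)) ≤ ωα (p k) :=
      hmona _ _ (hppos _).le (hpmono _ _ (Nat.le_add_right _ _))
    have h3 : (0:ℝ) ≤ 2 ^ d * ωβ (p (k + d)) :=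
      mul_nonneg (by positivity) (hbnn _ (hppos _).le)
    have := div_le_div₀ h3 h1 (hapos (k + d)) h2
    simpa only [hrdef, mul_div_assoc] using this
  -- the contraction factor
  set q : ℝ := (2:ℝ) ^ ((μ:ℝ) * β' - (μ:ℝ) * α) with hqdef
  have hq0 : 0 < q := Real.rpow_pos_of_pos (by norm_num) _
  have hq1 : q < 1 := by
    apply Real.rpow_lt_one_of_one_lt_of_neg (by norm_num)
    nlinarith
  have hstep : ∀ m : ℕ, N < m → r m ≤ q * r (m + μ) := by
    intro m hm
    have hm1 : 1 ≤ m := by omega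
    have hA := Hμ m hm1
    have hB := HN m hm
    have hb' : 0 < ωβ (1 / 2 ^ (m + μ)) := hbpos (m + μ) (by omega)
    have ha' : 0 < ωα (1 / 2 ^ (m + μ)) := hapos (m + μ)
    have ha : 0 < ωα (1 / 2 ^ m) := hapos m
    have hP : (0:ℝ) < (2:ℝ) ^ ((μ:ℝ) * β') := Real.rpow_pos_of_pos (by norm_num) _
    have hQ : (0:ℝ) < (2:ℝ) ^ ((μ:ℝ) * α) := Real.rpow_pos_of_pos (by norm_num) _
    have key : ωβ (1 / 2 ^ m) / ωα (1 / 2 ^ m) ≤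
        ((2:ℝ) ^ ((μ:ℝ) * β') * ωβ (1 / 2 ^ (m + μ)) / 2) /
        ((2:ℝ) ^ ((μ:ℝ) * α) * ωα (1 / 2 ^ (m + μ)) / 2) := by
      apply div_le_div₀
      · positivity
      · linarith
      · positivity
      · linarith
    have hqeq : q = (2:ℝ) ^ ((μ:ℝ) * β') / (2:ℝ) ^ ((μ:ℝ) * α) := by
      rw [hqdef, Real.rpow_sub (by norm_num)]
    calc r m ≤ _ := key
      _ = q * r (m + μ) := by
          simp only [hrdef, hqeq, hp]
          field_simp
  -- constants
  set N0 : ℕ := N + μ with hN0def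
  have hN01 : 1 ≤ N0 := by omega
  have hne : (Finset.Icc 1 N0).Nonempty := Finset.nonempty_Icc.mpr hN01
  set S : ℝ := ∑ k ∈ Finset.Icc 1 N0, r k with hSdef
  have hSnn : 0 ≤ S := Finset.sum_nonneg fun k _ => hrnn k
  set m₀ : ℝ := (Finset.Icc 1 N0).inf' hne r with hm₀def
  have hm₀pos : 0 < m₀ := by
    rw [hm₀def, Finset.lt_inf'_iff]
    intro k hk
    exact hrpos k (Finset.mem_Icc.mp hk).1
  set K : ℝ := max (S / m₀) ((μ:ℝ) * 2 ^ μ / (1 - q)) with hKdef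
  have hKpos : 0 < K := by
    have : (0:ℝ) < (μ:ℝ) * 2 ^ μ / (1 - q) := by
      apply div_pos
      · positivity
      · linarith
    exact lt_of_lt_of_le this (le_max_right _ _)
  have hKq : K * q + (μ:ℝ) * 2 ^ μ ≤ K := by
    have h1 : (μ:ℝ) * 2 ^ μ / (1 - q) ≤ K := le_max_right _ _
    have h2 : (μ:ℝ) * 2 ^ μ ≤ K * (1 - q) := by
      rw [div_le_iff₀ (by linarith)] at h1
      linarith
    nlinarith
  refine ⟨K, hKpos, ?_⟩
  have main : ∀ n : ℕ, 1 ≤ n → ∑ k ∈ Finset.Icc 1 n, r k ≤ K * r n := by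
    intro n
    induction n using Nat.strong_induction_on with
    | _ n ih =>
      intro hn
      by_cases hc : n ≤ N0
      · have hsub : Finset.Icc 1 n ⊆ Finset.Icc 1 N0 := Finset.Icc_subset_Icc_right hc
        have h1 : ∑ k ∈ Finset.Icc 1 n, r k ≤ S :=
          Finset.sum_le_sum_of_subset_of_nonneg hsub fun k _ _ => hrnn k
        have h2 : m₀ ≤ r n := Finset.inf'_le r (Finset.mem_Icc.mpr ⟨hn, hc⟩)
        have h3 : S / m₀ ≤ K := le_max_left _ _
        calc ∑ k ∈ Finset.Icc 1 n, r k ≤ S := h1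
          _ = (S / m₀) * m₀ := by field_simp
          _ ≤ K * r n := mul_le_mul h3 h2 hm₀pos.le (le_trans (div_nonneg hSnn hm₀pos.le) h3)
      · push_neg at hc
        set m : ℕ := n - μ with hmdef
        have hmn : m + μ = n := by omega
        have hNm : N < m := by omega
        have hm1 : 1 ≤ m := by omega
        have hmlt : m < n := by omega
        have ihm := ih m hmlt hm1
        have hstepm : r m ≤ q * r n := by
          have := hstep m hNm
          rwa [hmn] at this
        have hsplit : ∑ k ∈ Finset.Icc 1 n, r k
            = ∑ k ∈ Finset.Icc 1 m, r k + ∑ k ∈ Finset.Ioc m n, r k := by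
          have hI : ∀ x : ℕ, Finset.Icc 1 x = Finset.Ioc 0 x := by
            intro x; ext a; simp only [Finset.mem_Icc, Finset.mem_Ioc]; omega
          rw [hI n, hI m]
          exact (Finset.sum_Ioc_consecutive r (Nat.zero_le m) hmlt.le).symm
        have hIoc : ∑ k ∈ Finset.Ioc m n, r k ≤ (μ:ℝ) * (2 ^ μ * r n) := by
          have hb : ∀ k ∈ Finset.Ioc m n, r k ≤ 2 ^ μ * r n := by
            intro k hk
            rw [Finset.mem_Ioc] at hk
            have h1 : r k ≤ 2 ^ (n - k) * r (k + (n - k)) := hr_le k (n - k)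
            rw [Nat.add_sub_cancel' hk.2] at h1
            calc r k ≤ 2 ^ (n - k) * r n := h1
              _ ≤ 2 ^ μ * r n := by
                  apply mul_le_mul_of_nonneg_right _ (hrnn n)
                  exact pow_le_pow_right₀ (by norm_num) (by omega)
          have hcard := Finset.sum_le_card_nsmul _ _ _ hb
          rw [Nat.card_Ioc] at hcard
          have hnm : n - m = μ := by omega
          rw [hnm, nsmul_eq_mul] at hcard
          exact hcard
        calc ∑ k ∈ Finset.Icc 1 n, r k
            = ∑ k ∈ Finset.Icc 1 m, r k + ∑ k ∈ Finset.Ioc m n, r k := hsplit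
          _ ≤ K * r m + (μ:ℝ) * (2 ^ μ * r n) := add_le_add ihm hIoc
          _ ≤ K * (q * r n) + (μ:ℝ) * (2 ^ μ * r n) := by
              have := mul_le_mul_of_nonneg_left hstepm hKpos.le
              linarith
          _ = (K * q + (μ:ℝ) * 2 ^ μ) * r n := by ring
          _ ≤ K * r n := mul_le_mul_of_nonneg_right hKq (hrnn n)
  intro n hn
  exact main n hn
end

section
/- Let 0 ≤ β < α ≤ 1, let ω_α ∈ M_α and ω_β ∈ M_β with ω_β(t) > 0 for t > 0. Then there exists a constant K > 0, depending only on ω_α and ω_β, such that for every natural number n ≥ 1, Σ_{k=n}^{∞} ω_α(2^{−k})/ω_β(2^{−k}) ≤ K·ω_α(2^{−n})/ω_β(2^{−n}) (in particular the series converges). -/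
/-- Lemma 1, (4.2). For `0 ≤ β < α ≤ 1`, `ω_α ∈ M_α`,
`ω_β ∈ M_β` with `ω_β` positive on positives, the series
`Σ_{k=n}^∞ ω_α(2^{-k})/ω_β(2^{-k})` converges and is bounded by
`K ω_α(2^{-n})/ω_β(2^{-n})`. -/
theorem leindler_sum_bound_tail
    (α β : ℝ) (hβ : 0 ≤ β) (hβα : β < α) (hα : α ≤ 1)
    (ωα ωβ : ℝ → ℝ) (hωα : MemMClass α ωα) (hωβ : MemMClass β ωβ)
    (hωβpos : ∀ t : ℝ, 0 < t → 0 < ωβ t) :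
    ∃ K : ℝ, 0 < K ∧ ∀ n : ℕ, 1 ≤ n →
      (Summable fun j : ℕ => ωα (1 / 2 ^ (n + j)) / ωβ (1 / 2 ^ (n + j))) ∧
      ∑' j : ℕ, ωα (1 / 2 ^ (n + j)) / ωβ (1 / 2 ^ (n + j)) ≤
        K * (ωα (1 / 2 ^ n) / ωβ (1 / 2 ^ n)) := by
  obtain ⟨⟨_, hα0, hαmono, hαsub⟩, hαi, hαii⟩ := hωα
  obtain ⟨⟨_, hβ0, hβmono, hβsub⟩, hβi, hβii⟩ := hωβ
  set α' : ℝ := (α + β) / 2 with hα'def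
  have hβα' : β < α' := by rw [hα'def]; linarith
  have hα'α : α' < α := by rw [hα'def]; linarith
  obtain ⟨μ, hμ1, hβstep⟩ := hβi α' hβα'
  obtain ⟨N, hαstep⟩ := hαii μ hμ1
  have hμpos : (0:ℝ) < (μ:ℝ) := by exact_mod_cast hμ1
  set r : ℕ → ℝ := fun k => ωα (1 / 2 ^ k) / ωβ (1 / 2 ^ k) with hrdef
  have hpow : ∀ k : ℕ, (0:ℝ) < 1 / 2 ^ k := fun k => by positivity
  have hBk : ∀ k : ℕ, 0 < ωβ (1 / 2 ^ k) := fun k => hωβpos _ (hpow k)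
  have hAk : ∀ k : ℕ, 0 ≤ ωα (1 / 2 ^ k) := fun k => by
    have := hαmono 0 (1 / 2 ^ k) le_rfl (hpow k).le
    rwa [hα0] at this
  have hr0 : ∀ k, 0 ≤ r k := fun k => div_nonneg (hAk k) (hBk k).le
  -- crude doubling bound
  have hstep2 : ∀ k : ℕ, r (k + 1) ≤ 2 * r k := by
    intro k
    have hA : ωα (1 / 2 ^ (k + 1)) ≤ ωα (1 / 2 ^ k) := by
      apply hαmono _ _ (hpow _).le
      exact one_div_le_one_div_of_le (pow_pos two_pos k)
        (pow_le_pow_right₀ one_le_two (Nat.le_succ k))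
    have hB : ωβ (1 / 2 ^ k) ≤ 2 * ωβ (1 / 2 ^ (k + 1)) := by
      have h := hβsub (1 / 2 ^ (k + 1)) (1 / 2 ^ (k + 1)) (hpow _).le (hpow _).le
      have he : (1:ℝ) / 2 ^ (k + 1) + 1 / 2 ^ (k + 1) = 1 / 2 ^ k := by
        rw [pow_succ]; field_simp; ring
      rw [he] at h; linarith
    have : ωα (1 / 2 ^ (k + 1)) / ωβ (1 / 2 ^ (k + 1)) ≤
        (2 * ωα (1 / 2 ^ k)) / ωβ (1 / 2 ^ k) := by
      rw [div_le_div_iff₀ (hBk (k + 1)) (hBk k)]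
      nlinarith [mul_le_mul_of_nonneg_right hA (hBk k).le,
        mul_le_mul_of_nonneg_left hB (hAk k)]
    simpa [hrdef, mul_div_assoc] using this
  have hcrude : ∀ k d : ℕ, r (k + d) ≤ 2 ^ d * r k := by
    intro k d
    induction d with
    | zero => simp
    | succ d ih =>
      have h1 : r (k + d + 1) ≤ 2 * r (k + d) := hstep2 (k + d)
      have h2 : 2 * r (k + d) ≤ 2 * (2 ^ d * r k) := by linarith
      calc r (k + (d + 1)) = r (k + d + 1) := by ring_nf
        _ ≤ 2 * (2 ^ d * r k) := le_trans h1 h2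
        _ = 2 ^ (d + 1) * r k := by ring
  -- geometric contraction
  set θ : ℝ := (2:ℝ) ^ ((μ:ℝ) * (α' - α)) with hθdef
  have hθpos : 0 < θ := Real.rpow_pos_of_pos two_pos _
  have hθ1 : θ < 1 :=
    Real.rpow_lt_one_of_one_lt_of_neg one_lt_two
      (mul_neg_of_pos_of_neg hμpos (by linarith))
  have hgeo : ∀ n : ℕ, N < n → r (n + μ) ≤ θ * r n := by
    intro n hn
    have h1 := hαstep n hn
    have h2 := hβstep n (by omega)
    have hP : (0:ℝ) < (2:ℝ) ^ ((μ:ℝ) * α) := Real.rpow_pos_of_pos two_pos _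
    have hQ : (0:ℝ) < (2:ℝ) ^ ((μ:ℝ) * α') := Real.rpow_pos_of_pos two_pos _
    have hθeq : θ * (2:ℝ) ^ ((μ:ℝ) * α) = (2:ℝ) ^ ((μ:ℝ) * α') := by
      rw [hθdef, ← Real.rpow_add two_pos]; ring_nf
    have key : ωα (1 / 2 ^ (n + μ)) / ωβ (1 / 2 ^ (n + μ)) ≤
        (θ * ωα (1 / 2 ^ n)) / ωβ (1 / 2 ^ n) := by
      rw [div_le_div_iff₀ (hBk (n + μ)) (hBk n)]
      have hm : ((2:ℝ) ^ ((μ:ℝ) * α) * ωα (1 / 2 ^ (n + μ))) * (2 * ωβ (1 / 2 ^ n)) ≤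
          (2 * ωα (1 / 2 ^ n)) * ((2:ℝ) ^ ((μ:ℝ) * α') * ωβ (1 / 2 ^ (n + μ))) := by
        apply mul_le_mul h1.le h2.le (by linarith [hBk n])
        nlinarith [hAk n]
      rw [← hθeq] at hm
      nlinarith [hAk (n + μ), hBk (n + μ), hBk n, hP, hθpos]
    simpa [hrdef, mul_div_assoc] using key
  have hgeoq : ∀ n : ℕ, N < n → ∀ q : ℕ, r (n + q * μ) ≤ θ ^ q * r n := by
    intro n hn q
    induction q with
    | zero => simp
    | succ q ih =>
      have h1 : r (n + q * μ + μ) ≤ θ * r (n + q * μ) := hgeo (n + q * μ) (by omega)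
      have h2 : θ * r (n + q * μ) ≤ θ * (θ ^ q * r n) :=
        mul_le_mul_of_nonneg_left ih hθpos.le
      calc r (n + (q + 1) * μ) = r (n + q * μ + μ) := by ring_nf
        _ ≤ θ * (θ ^ q * r n) := le_trans h1 h2
        _ = θ ^ (q + 1) * r n := by ring
  -- convert to a true geometric bound with ratio ρ = θ^(1/μ)
  set ρ : ℝ := θ ^ ((1:ℝ) / (μ:ℝ)) with hρdef
  have hρpos : 0 < ρ := Real.rpow_pos_of_pos hθpos _
  have hρ1 : ρ < 1 := Real.rpow_lt_one hθpos.le hθ1 (by positivity)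
  have hρpow : ∀ j : ℕ, ρ ^ j = θ ^ ((j:ℝ) / (μ:ℝ)) := by
    intro j
    rw [hρdef, ← Real.rpow_natCast (θ ^ ((1:ℝ) / (μ:ℝ))) j, ← Real.rpow_mul hθpos.le]
    congr 1
    field_simp
  have hθnatle : ∀ j : ℕ, θ ^ (j / μ) ≤ θ⁻¹ * ρ ^ j := by
    intro j
    have hdm : (j:ℝ) / (μ:ℝ) - 1 ≤ ((j / μ : ℕ) : ℝ) := by
      have h1 : j % μ < μ := Nat.mod_lt _ (by omega)
      have h2 := Nat.div_add_mod j μ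
      have h3 : j < μ * (j / μ) + μ := by omega
      have hj : (j:ℝ) < (μ:ℝ) * ((j / μ : ℕ):ℝ) + (μ:ℝ) := by exact_mod_cast h3
      rw [sub_le_iff_le_add, div_le_iff₀ hμpos]
      nlinarith
    have h1 : θ ^ ((j / μ : ℕ) : ℝ) ≤ θ ^ ((j:ℝ) / (μ:ℝ) - 1) :=
      Real.rpow_le_rpow_of_exponent_ge hθpos hθ1.le hdm
    have h2 : θ ^ ((j:ℝ) / (μ:ℝ) - 1) = θ⁻¹ * ρ ^ j := by
      rw [hρpow j, Real.rpow_sub hθpos, Real.rpow_one, div_eq_mul_inv]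
      ring
    rw [← h2]
    calc θ ^ (j / μ) = θ ^ ((j / μ : ℕ) : ℝ) := (Real.rpow_natCast θ _).symm
      _ ≤ θ ^ ((j:ℝ) / (μ:ℝ) - 1) := h1
  set C1 : ℝ := 2 ^ μ / θ with hC1def
  have hC1pos : 0 < C1 := by positivity
  have hC11 : 1 ≤ C1 := by
    rw [hC1def, le_div_iff₀ hθpos, one_mul]
    calc θ ≤ 1 := hθ1.le
      _ ≤ 2 ^ μ := one_le_pow₀ one_le_two
  have hbound1 : ∀ n : ℕ, N < n → ∀ j : ℕ, r (n + j) ≤ C1 * ρ ^ j * r n := by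
    intro n hn j
    have hjd := Nat.div_add_mod j μ
    have hcomm : μ * (j / μ) = (j / μ) * μ := Nat.mul_comm _ _
    have heq : n + j = n + (j / μ) * μ + j % μ := by omega
    have h1 : r (n + (j / μ) * μ + j % μ) ≤ 2 ^ (j % μ) * r (n + (j / μ) * μ) :=
      hcrude _ _
    have h2 : r (n + (j / μ) * μ) ≤ θ ^ (j / μ) * r n := hgeoq n hn _
    have h3 : (2:ℝ) ^ (j % μ) ≤ 2 ^ μ :=
      pow_le_pow_right₀ one_le_two (le_of_lt (Nat.mod_lt _ (by omega)))
    have h4 : θ ^ (j / μ) ≤ θ⁻¹ * ρ ^ j := hθnatle j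
    have hrn : 0 ≤ r n := hr0 n
    have hθq : (0:ℝ) ≤ θ ^ (j / μ) := by positivity
    calc r (n + j) = r (n + (j / μ) * μ + j % μ) := by rw [← heq]
      _ ≤ 2 ^ (j % μ) * r (n + (j / μ) * μ) := h1
      _ ≤ 2 ^ μ * (θ ^ (j / μ) * r n) :=
          mul_le_mul h3 h2 (hr0 _) (by positivity)
      _ ≤ 2 ^ μ * ((θ⁻¹ * ρ ^ j) * r n) := by
          apply mul_le_mul_of_nonneg_left _ (by positivity)
          exact mul_le_mul_of_nonneg_right h4 hrn
      _ = C1 * ρ ^ j * r n := by rw [hC1def]; field_simp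
  -- uniform bound for all n ≥ 1
  set M : ℕ := N + 1 with hMdef
  set C2 : ℝ := 2 ^ M * C1 / ρ ^ M with hC2def
  have hC2pos : 0 < C2 := by positivity
  have hbound : ∀ n : ℕ, 1 ≤ n → ∀ j : ℕ, r (n + j) ≤ C2 * ρ ^ j * r n := by
    intro n hn j
    have hρM : (0:ℝ) < ρ ^ M := by positivity
    rcases le_or_gt M n with hMn | hnM
    · have h1 : r (n + j) ≤ C1 * ρ ^ j * r n := hbound1 n (by omega) j
      have hfac : C1 ≤ C2 := by
        rw [hC2def, le_div_iff₀ hρM]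
        have h2M : (1:ℝ) ≤ 2 ^ M := one_le_pow₀ one_le_two
        have hρM1 : ρ ^ M ≤ 1 := pow_le_one₀ hρpos.le hρ1.le
        nlinarith
      calc r (n + j) ≤ C1 * ρ ^ j * r n := h1
        _ ≤ C2 * ρ ^ j * r n := by
            apply mul_le_mul_of_nonneg_right _ (hr0 n)
            exact mul_le_mul_of_nonneg_right hfac (by positivity)
    · set d : ℕ := M - n with hddef
      have hdM : d ≤ M := by omega
      have hρd : ρ ^ M ≤ ρ ^ d := pow_le_pow_of_le_one hρpos.le hρ1.le hdM
      rcases lt_or_ge j d with hjd | hjd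
      · -- small j: crude bound
        have h1 : r (n + j) ≤ 2 ^ j * r n := hcrude n j
        have h2 : (2:ℝ) ^ j ≤ 2 ^ M := pow_le_pow_right₀ one_le_two (by omega)
        have hρj : ρ ^ M ≤ ρ ^ j := pow_le_pow_of_le_one hρpos.le hρ1.le (by omega)
        have hgoal : (2:ℝ) ^ M ≤ C2 * ρ ^ j := by
          rw [hC2def, div_mul_eq_mul_div, le_div_iff₀ hρM]
          have t1 : (2:ℝ) ^ M * ρ ^ M ≤ (2:ℝ) ^ M * ρ ^ j :=
            mul_le_mul_of_nonneg_left hρj (by positivity)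
          have t2 : (2:ℝ) ^ M * ρ ^ j ≤ 2 ^ M * C1 * ρ ^ j := by
            calc (2:ℝ) ^ M * ρ ^ j = 2 ^ M * ρ ^ j * 1 := by ring
              _ ≤ 2 ^ M * ρ ^ j * C1 := mul_le_mul_of_nonneg_left hC11 (by positivity)
              _ = 2 ^ M * C1 * ρ ^ j := by ring
          calc (2:ℝ) ^ M * ρ ^ M ≤ (2:ℝ) ^ M * ρ ^ j := t1
            _ ≤ 2 ^ M * C1 * ρ ^ j := t2
        calc r (n + j) ≤ 2 ^ j * r n := h1
          _ ≤ 2 ^ M * r n := mul_le_mul_of_nonneg_right h2 (hr0 n)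
          _ ≤ C2 * ρ ^ j * r n := mul_le_mul_of_nonneg_right hgoal (hr0 n)
      · -- large j: pass through M
        have hMeq : M = n + d := by omega
        have h1 : r (M + (j - d)) ≤ C1 * ρ ^ (j - d) * r M := hbound1 M (by omega) _
        have h2 : r M ≤ 2 ^ d * r n := by rw [hMeq]; exact hcrude n d
        have hsplit : ρ ^ (j - d) * ρ ^ d = ρ ^ j := by
          rw [← pow_add]; congr 1; omega
        have h2d : (2:ℝ) ^ d ≤ 2 ^ M := pow_le_pow_right₀ one_le_two hdM
        have heq : n + j = M + (j - d) := by omega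
        have h3 : r (n + j) ≤ C1 * ρ ^ (j - d) * (2 ^ d * r n) := by
          rw [heq]
          calc r (M + (j - d)) ≤ C1 * ρ ^ (j - d) * r M := h1
            _ ≤ C1 * ρ ^ (j - d) * (2 ^ d * r n) :=
                mul_le_mul_of_nonneg_left h2 (by positivity)
        have h4 : C1 * ρ ^ (j - d) * (2 ^ d * r n) ≤ C2 * ρ ^ j * r n := by
          have hkey : C1 * ρ ^ (j - d) * 2 ^ d ≤ C2 * ρ ^ j := by
            have e1 : C1 * ρ ^ (j - d) * 2 ^ d * ρ ^ M ≤ C1 * ρ ^ (j - d) * 2 ^ d * ρ ^ d := by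
              apply mul_le_mul_of_nonneg_left hρd (by positivity)
            have e2 : C1 * ρ ^ (j - d) * 2 ^ d * ρ ^ d = C1 * 2 ^ d * ρ ^ j := by
              rw [← hsplit]; ring
            have e3 : C1 * 2 ^ d * ρ ^ j ≤ C1 * 2 ^ M * ρ ^ j := by
              apply mul_le_mul_of_nonneg_right _ (by positivity)
              exact mul_le_mul_of_nonneg_left h2d hC1pos.le
            have e4 : C1 * ρ ^ (j - d) * 2 ^ d * ρ ^ M ≤ 2 ^ M * C1 * ρ ^ j := by
              calc C1 * ρ ^ (j - d) * 2 ^ d * ρ ^ M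
                  ≤ C1 * 2 ^ d * ρ ^ j := by rw [← e2]; exact e1
                _ ≤ C1 * 2 ^ M * ρ ^ j := e3
                _ = 2 ^ M * C1 * ρ ^ j := by ring
            calc C1 * ρ ^ (j - d) * 2 ^ d
                = (C1 * ρ ^ (j - d) * 2 ^ d * ρ ^ M) / ρ ^ M := by
                  field_simp
              _ ≤ (2 ^ M * C1 * ρ ^ j) / ρ ^ M := by gcongr
              _ = C2 * ρ ^ j := by rw [hC2def]; ring
          calc C1 * ρ ^ (j - d) * (2 ^ d * r n)
              = (C1 * ρ ^ (j - d) * 2 ^ d) * r n := by ring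
            _ ≤ C2 * ρ ^ j * r n := mul_le_mul_of_nonneg_right hkey (hr0 n)
        exact le_trans h3 h4
  -- geometric sum bound
  have hgeomsum : ∀ J : ℕ, ∑ j ∈ Finset.range J, ρ ^ j ≤ (1 - ρ)⁻¹ := by
    intro J
    have hd : (0:ℝ) < 1 - ρ := by linarith
    rw [geom_sum_eq (ne_of_lt hρ1) J, div_le_iff_of_neg (by linarith : ρ - 1 < 0)]
    have hJ : (0:ℝ) ≤ ρ ^ J := by positivity
    have he : (1 - ρ)⁻¹ * (ρ - 1) = -1 := by field_simp; ring
    linarith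
  have h1ρ : (0:ℝ) < 1 - ρ := by linarith
  refine ⟨C2 * (1 - ρ)⁻¹, mul_pos hC2pos (inv_pos.mpr h1ρ), fun n hn => ?_⟩
  have hpartial : ∀ J : ℕ, ∑ j ∈ Finset.range J, r (n + j) ≤ C2 * (1 - ρ)⁻¹ * r n := by
    intro J
    calc ∑ j ∈ Finset.range J, r (n + j)
        ≤ ∑ j ∈ Finset.range J, C2 * ρ ^ j * r n :=
          Finset.sum_le_sum fun j _ => hbound n hn j
      _ = C2 * r n * ∑ j ∈ Finset.range J, ρ ^ j := by
          rw [Finset.mul_sum]; apply Finset.sum_congr rfl; intro j _; ring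
      _ ≤ C2 * r n * (1 - ρ)⁻¹ := by
          exact mul_le_mul_of_nonneg_left (hgeomsum J) (mul_nonneg hC2pos.le (hr0 n))
      _ = C2 * (1 - ρ)⁻¹ * r n := by ring
  have hnn : ∀ j : ℕ, 0 ≤ r (n + j) := fun j => hr0 (n + j)
  exact ⟨summable_of_sum_range_le hnn hpartial,
    Real.tsum_le_of_sum_range_le hnn hpartial⟩
end

section
/- Let a ∈ ℂ with |a| < 1, let θ : ℝ → ℝ be a continuous strictly increasing function with e^{iθ(t)} = τ_a(e^{it}) for all t ∈ ℝ, and let f ∈ C(𝕋). Then F = f ∘ θ^{−1} is a continuous 2π-periodic function and for every δ > 0, ω(f ∘ θ^{−1}, δ) ≤ (2/(1 − |a|))·ω(f, δ). -/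
/-- The Möbius transform `τ_a(z) = (z - a)/(1 - conj a · z)`. -/
noncomputable def tauA (a z : ℂ) : ℂ := (z - a) / (1 - (starRingEnd ℂ) a * z)

/-- The modulus of continuity `ω(g, δ) = sup { |g x - g y| : |x - y| ≤ δ }`. -/
noncomputable def modContR (g : ℝ → ℂ) (δ : ℝ) : ℝ :=
  sSup {q : ℝ | ∃ x y : ℝ, |x - y| ≤ δ ∧ q = ‖g x - g y‖}

/-! ### Auxiliary material -/

/-- The canonical smooth branch of the phase. -/
noncomputable def theta0 (a : ℂ) (t : ℝ) : ℝ :=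
  t - 2 * Complex.arg (1 - (starRingEnd ℂ) a * Complex.exp (t * Complex.I))

lemma w_re_pos {a : ℂ} (ha : ‖a‖ < 1) (t : ℝ) :
    0 < (1 - (starRingEnd ℂ) a * Complex.exp (t * Complex.I)).re := by
  have h1 : ((starRingEnd ℂ) a * Complex.exp (t * Complex.I)).re ≤ ‖a‖ := by
    calc ((starRingEnd ℂ) a * Complex.exp (t * Complex.I)).re
        ≤ ‖(starRingEnd ℂ) a * Complex.exp (t * Complex.I)‖ := Complex.re_le_norm _
      _ = ‖a‖ := by simp [map_mul, Complex.norm_exp_ofReal_mul_I]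
  simp only [Complex.sub_re, Complex.one_re]
  linarith

lemma w_ne_zero {a : ℂ} (ha : ‖a‖ < 1) (t : ℝ) :
    (1 - (starRingEnd ℂ) a * Complex.exp (t * Complex.I)) ≠ 0 := by
  intro h
  have := w_re_pos ha t
  rw [h] at this; simp at this

lemma theta0_hasDeriv {a : ℂ} (ha : ‖a‖ < 1) (t : ℝ) :
    HasDerivAt (theta0 a)
      (1 + 2 * ((starRingEnd ℂ) a * Complex.exp (t * Complex.I) /
        (1 - (starRingEnd ℂ) a * Complex.exp (t * Complex.I))).re) t := by
  set u : ℝ → ℂ := fun t => (starRingEnd ℂ) a * Complex.exp (t * Complex.I) with hu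
  have hexp : ∀ s : ℝ, HasDerivAt (fun t:ℝ => Complex.exp (t*Complex.I))
      (Complex.I * Complex.exp (s*Complex.I)) s := by
    intro s
    have h1 : HasDerivAt (fun t:ℝ => (t:ℂ)*Complex.I) Complex.I s := by
      simpa using (Complex.ofRealCLM.hasDerivAt (x := s)).mul_const Complex.I
    simpa [mul_comm] using h1.cexp
  have hw : HasDerivAt (fun t:ℝ => 1 - u t)
      (-((starRingEnd ℂ) a * (Complex.I * Complex.exp (t*Complex.I)))) t :=
    (((hexp t).const_mul ((starRingEnd ℂ) a))).const_sub 1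
  have hlog : HasDerivAt (fun t:ℝ => Complex.log (1 - u t))
      ((-((starRingEnd ℂ) a * (Complex.I * Complex.exp (t*Complex.I)))) / (1 - u t)) t :=
    hw.clog_real (Or.inl (w_re_pos ha t))
  have him : HasDerivAt (fun t:ℝ => (Complex.log (1 - u t)).im)
      (((-((starRingEnd ℂ) a * (Complex.I * Complex.exp (t*Complex.I)))) / (1 - u t)).im) t := by
    exact (Complex.imCLM.hasFDerivAt.comp_hasDerivAt t hlog)
  have harg : theta0 a = fun t:ℝ => t - 2 * (Complex.log (1 - u t)).im := by
    funext s; simp [theta0, Complex.log_im, hu]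
  rw [harg]
  have hd := ((hasDerivAt_id t).sub (him.const_mul 2))
  convert hd using 1
  case e'_4 => rfl
  case e'_5 => rfl
  case e'_8 => rfl
  have hne := w_ne_zero ha t
  have h2 : (-((starRingEnd ℂ) a * (Complex.I * Complex.exp (t*Complex.I)))) / (1 - u t)
      = -Complex.I * (u t / (1 - u t)) := by
    rw [mul_div_assoc']
    congr 1
    rw [hu]; ring
  rw [h2]
  have h3 : (-Complex.I * (u t / (1 - u t))).im = -((u t / (1 - u t)).re) := by
    simp [Complex.mul_im]
  rw [h3]; simp [hu]

lemma deriv_lower {a : ℂ} (ha : ‖a‖ < 1) (u : ℂ)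
    (hu : ‖u‖ = ‖a‖) :
    (1 - ‖a‖) / (1 + ‖a‖) ≤ 1 + 2 * (u / (1 - u)).re := by
  set r := ‖a‖ with hr
  have hr0 : 0 ≤ r := norm_nonneg a
  have hx : u.re ^ 2 + u.im ^ 2 = r ^ 2 := by
    have := Complex.sq_norm u
    rw [hu, Complex.normSq_apply] at this
    nlinarith [this]
  have hxr : |u.re| ≤ r := by
    rw [← hu]; exact Complex.abs_re_le_norm u
  have hD : 0 < (1 - u.re) ^ 2 + u.im ^ 2 := by
    have h1 : u.re ≤ r := (abs_le.1 hxr).2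
    nlinarith
  have hre : (u / (1 - u)).re
      = (u.re * (1 - u.re) + u.im * (-u.im)) / ((1 - u.re)^2 + u.im^2) := by
    rw [Complex.div_re]
    simp [Complex.normSq_apply]
    ring_nf
  rw [hre]
  have heq : 1 + 2 * ((u.re * (1 - u.re) + u.im * (-u.im)) / ((1 - u.re)^2 + u.im^2))
      = (((1 - u.re)^2 + u.im^2) + 2 * (u.re * (1 - u.re) + u.im * (-u.im)))
        / ((1 - u.re)^2 + u.im^2) := by
    field_simp
  rw [heq, div_le_div_iff₀ (by positivity) hD]
  have h1 : -r ≤ u.re := (abs_le.1 hxr).1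
  nlinarith [hD, hx, h1, hr0, ha]

lemma theta0_exp {a : ℂ} (ha : ‖a‖ < 1) (t : ℝ) :
    Complex.exp ((theta0 a t : ℝ) * Complex.I) = tauA a (Complex.exp (t * Complex.I)) := by
  set w : ℂ := 1 - (starRingEnd ℂ) a * Complex.exp (t * Complex.I) with hwdef
  have hwne : w ≠ 0 := w_ne_zero ha t
  have habs0 : (‖w‖ : ℂ) ≠ 0 := by
    norm_cast
    simpa using (norm_ne_zero_iff.mpr hwne)
  set A : ℝ := Complex.arg w with hA
  have hw := Complex.norm_mul_exp_arg_mul_I w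
  have hEA : Complex.exp ((A:ℂ) * Complex.I) = w / (‖w‖ : ℂ) := by
    rw [eq_div_iff habs0, mul_comm]
    exact hw
  have hene : Complex.exp ((t:ℂ) * Complex.I) ≠ 0 := Complex.exp_ne_zero _
  have h1 : ((theta0 a t : ℝ) : ℂ) * Complex.I
      = (t:ℂ)*Complex.I + (-((A:ℂ)*Complex.I)) + (-((A:ℂ)*Complex.I)) := by
    have : theta0 a t = t - 2*A := rfl
    rw [this]; push_cast; ring
  rw [h1, Complex.exp_add, Complex.exp_add, Complex.exp_neg, hEA]
  have hconjw : (starRingEnd ℂ) w = 1 - a * (Complex.exp ((t:ℂ)*Complex.I))⁻¹ := by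
    rw [hwdef]
    rw [map_sub, map_one, map_mul, Complex.conj_conj, ← Complex.exp_conj]
    have : (starRingEnd ℂ) ((t:ℂ) * Complex.I) = -((t:ℂ)*Complex.I) := by
      simp [Complex.conj_ofReal]
    rw [this, Complex.exp_neg]
  have hec : Complex.exp ((t:ℂ)*Complex.I) * (starRingEnd ℂ) w
      = Complex.exp ((t:ℂ)*Complex.I) - a := by
    rw [hconjw]; field_simp
  have hns : (‖w‖ : ℂ) * (‖w‖ : ℂ) = w * (starRingEnd ℂ) w := by
    rw [Complex.mul_conj]
    norm_cast
    rw [Complex.normSq_eq_norm_sq, sq]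
  rw [tauA, ← hwdef]
  field_simp
  linear_combination Complex.exp ((t:ℂ)*Complex.I) * w * hns + w * w * hec + Complex.exp ((t:ℂ)*Complex.I) ^ 2 * (starRingEnd ℂ) a * hns + Complex.exp ((t:ℂ)*Complex.I) * (starRingEnd ℂ) a * w * hec + Complex.exp ((t:ℂ)*Complex.I) * (starRingEnd ℂ) a * (Complex.exp ((t:ℂ)*Complex.I) - a) * hwdef

lemma exp_two_pi_shift (t : ℝ) :
    Complex.exp (((t + 2*Real.pi : ℝ) : ℂ) * Complex.I) = Complex.exp ((t:ℝ) * Complex.I) := by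
  push_cast
  rw [add_mul, Complex.exp_add]
  rw [show (2:ℂ) * (Real.pi:ℂ) * Complex.I = 2 * ↑Real.pi * Complex.I by ring]
  rw [Complex.exp_two_pi_mul_I, mul_one]

lemma theta0_periodic (a : ℂ) (t : ℝ) : theta0 a (t + 2*Real.pi) = theta0 a t + 2*Real.pi := by
  unfold theta0
  rw [exp_two_pi_shift]
  ring

lemma const_of_int_valued {D : ℝ → ℝ} (hD : Continuous D)
    (h : ∀ t, ∃ k : ℤ, D t = 2 * Real.pi * k) : ∀ t, D t = D 0 := by
  intro t
  by_contra hne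
  obtain ⟨k0, hk0⟩ := h 0
  obtain ⟨k1, hk1⟩ := h t
  have hkne : k0 ≠ k1 := by
    intro he; apply hne; rw [hk1, hk0, he]
  have hpi := Real.pi_pos
  set v : ℝ := 2 * Real.pi * k0 + (if k0 < k1 then Real.pi else -Real.pi) with hv
  have hvmem : v ∈ Set.uIcc (D 0) (D t) := by
    rw [Set.mem_uIcc]
    rcases lt_or_gt_of_ne hkne with hlt | hgt
    · left
      constructor
      · rw [hk0, hv, if_pos hlt]; linarith
      · rw [hk1, hv, if_pos hlt]
        have : (k0 : ℝ) + 1 ≤ k1 := by exact_mod_cast hlt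
        nlinarith
    · right
      constructor
      · rw [hk1, hv, if_neg (not_lt.2 hgt.le)]
        have : (k1 : ℝ) + 1 ≤ k0 := by exact_mod_cast hgt
        nlinarith
      · rw [hk0, hv, if_neg (not_lt.2 hgt.le)]; linarith
  obtain ⟨s, _, hs⟩ := intermediate_value_uIcc (f := D) (a := 0) (b := t) hD.continuousOn hvmem
  obtain ⟨k, hk⟩ := h s
  rw [hk] at hs
  by_cases hlt : k0 < k1
  · rw [hv, if_pos hlt] at hs
    have h2 : (2*k : ℝ) = 2*k0 + 1 := by nlinarith [hs, hpi]
    have : 2*k = 2*k0+1 := by exact_mod_cast h2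
    omega
  · rw [hv, if_neg hlt] at hs
    have h2 : (2*k : ℝ) = 2*k0 - 1 := by nlinarith [hs, hpi]
    have : 2*k = 2*k0-1 := by exact_mod_cast h2
    omega

lemma bdd_of_periodic (f : ℝ → ℂ) (hf : Continuous f)
    (hper : ∀ x : ℝ, f (x + 2 * Real.pi) = f x) :
    ∃ M : ℝ, ∀ x : ℝ, ‖f x‖ ≤ M := by
  have hP : Function.Periodic f (2 * Real.pi) := hper
  obtain ⟨M, hM⟩ := (isCompact_Icc (a := (0:ℝ)) (b := 2*Real.pi)).exists_bound_of_continuousOn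
    hf.continuousOn
  refine ⟨M, fun x => ?_⟩
  set y : ℝ := 2 * Real.pi * Int.fract (x / (2*Real.pi)) with hy
  have hpi := Real.pi_pos
  have hfx : f x = f y := by
    have h1 := hP.sub_int_mul_eq (x := x) (n := ⌊x / (2*Real.pi)⌋)
    have h2 : x - ⌊x / (2*Real.pi)⌋ * (2*Real.pi) = y := by
      rw [hy, Int.fract]
      field_simp
    rw [← h2, h1]
  have hymem : y ∈ Set.Icc (0:ℝ) (2*Real.pi) := by
    constructor
    · have := Int.fract_nonneg (x / (2*Real.pi))
      positivity
    · have := Int.fract_lt_one (x / (2*Real.pi))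
      nlinarith [Int.fract_nonneg (x / (2*Real.pi))]
  rw [hfx]
  exact hM y hymem

lemma modContR_bddAbove {g : ℝ → ℂ} {M : ℝ} (hM : ∀ x, ‖g x‖ ≤ M) (δ : ℝ) :
    BddAbove {q : ℝ | ∃ x y : ℝ, |x - y| ≤ δ ∧ q = ‖g x - g y‖} := by
  refine ⟨2*M, fun q hq => ?_⟩
  obtain ⟨x, y, _, rfl⟩ := hq
  calc ‖g x - g y‖ ≤ ‖g x‖ + ‖g y‖ :=
        norm_sub_le _ _
    _ ≤ 2*M := by have := hM x; have := hM y; linarith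

lemma modContR_nonneg {g : ℝ → ℂ} {δ : ℝ} (hδ : 0 ≤ δ)
    (hb : BddAbove {q : ℝ | ∃ x y : ℝ, |x - y| ≤ δ ∧ q = ‖g x - g y‖}) :
    0 ≤ modContR g δ := by
  apply le_csSup hb
  exact ⟨0, 0, by simpa using hδ, by simp⟩

lemma le_modContR {g : ℝ → ℂ} {δ : ℝ}
    (hb : BddAbove {q : ℝ | ∃ x y : ℝ, |x - y| ≤ δ ∧ q = ‖g x - g y‖})
    {x y : ℝ} (h : |x - y| ≤ δ) : ‖g x - g y‖ ≤ modContR g δ :=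
  le_csSup hb ⟨x, y, h, rfl⟩

lemma telescope {g : ℝ → ℂ} {δ : ℝ} (hδ : 0 < δ)
    (hb : BddAbove {q : ℝ | ∃ x y : ℝ, |x - y| ≤ δ ∧ q = ‖g x - g y‖}) :
    ∀ n : ℕ, ∀ u v : ℝ, |u - v| ≤ n * δ →
      ‖g u - g v‖ ≤ n * modContR g δ := by
  intro n
  induction n with
  | zero =>
    intro u v h
    simp only [Nat.cast_zero, zero_mul] at h ⊢
    have : u = v := by
      have := abs_nonneg (u - v)
      have h2 : |u - v| = 0 := le_antisymm h this
      have := abs_eq_zero.1 h2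
      linarith
    simp [this]
  | succ n ih =>
    intro u v h
    set m : ℝ := (n : ℝ) with hm
    have hm1 : (0:ℝ) < m + 1 := by positivity
    set w : ℝ := u + (v - u) * (m / (m+1)) with hw
    have h1 : |u - w| ≤ n * δ := by
      have : u - w = -((v-u) * (m/(m+1))) := by rw [hw]; ring
      rw [this, abs_neg, abs_mul, abs_div]
      rw [abs_of_pos hm1, _root_.abs_of_nonneg (by positivity : (0:ℝ) ≤ m)]
      have h3 : |v - u| ≤ (m+1) * δ := by rw [abs_sub_comm] at h; push_cast at h; exact h
      calc |v - u| * (m / (m+1)) ≤ ((m+1)*δ) * (m/(m+1)) := by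
            apply mul_le_mul_of_nonneg_right h3; positivity
        _ = m * δ := by field_simp
    have h2 : |w - v| ≤ δ := by
      have : w - v = (u - v) / (m+1) := by rw [hw]; field_simp; ring
      rw [this, abs_div, abs_of_pos hm1, div_le_iff₀ hm1]
      calc |u - v| ≤ (n+1) * δ := by rwa [Nat.cast_add_one] at h
        _ = δ * (m+1) := by rw [hm]; ring
    calc ‖g u - g v‖ ≤ ‖g u - g w‖ + ‖g w - g v‖ :=
          norm_sub_le_norm_sub_add_norm_sub _ _ _
      _ ≤ n * modContR g δ + modContR g δ := add_le_add (ih u w h1) (le_modContR hb h2)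
      _ = (n+1) * modContR g δ := by ring
      _ = ((n+1 : ℕ) : ℝ) * modContR g δ := by push_cast; ring

/-- Lemma 4, upper estimate. If `θ` is a continuous strictly
increasing branch of the nonlinear phase and `f ∈ C(𝕋)`, then `F = f ∘ θ⁻¹` is
continuous, `2π`-periodic, and `ω(f ∘ θ⁻¹, δ) ≤ (2/(1 - |a|)) ω(f, δ)`. -/
theorem modulus_of_continuity_comp_inv_phase
    (a : ℂ) (ha : ‖a‖ < 1)
    (θ : ℝ → ℝ) (hθcont : Continuous θ) (hθmono : StrictMono θ)
    (hθ : ∀ t : ℝ, Complex.exp (θ t * Complex.I) =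
      tauA a (Complex.exp (t * Complex.I)))
    (hθbij : Function.Bijective θ)
    (f : ℝ → ℂ) (hf : Continuous f) (hper : ∀ x : ℝ, f (x + 2 * Real.pi) = f x) :
    Continuous (f ∘ Function.invFun θ) ∧
    (∀ x : ℝ, (f ∘ Function.invFun θ) (x + 2 * Real.pi) = (f ∘ Function.invFun θ) x) ∧
    ∀ δ : ℝ, 0 < δ →
      modContR (f ∘ Function.invFun θ) δ ≤ 2 / (1 - ‖a‖) * modContR f δ := by
  have hpi := Real.pi_pos
  set r := ‖a‖ with hr
  have hr0 : 0 ≤ r := norm_nonneg a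
  have hr1 : 0 < 1 - r := by linarith
  have hr1' : 0 < 1 + r := by linarith
  -- inverse function basics
  have hri : ∀ x, θ (Function.invFun θ x) = x :=
    fun x => Function.rightInverse_invFun hθbij.surjective x
  have hinv_cont : Continuous (Function.invFun θ) := by
    let e : ℝ ≃o ℝ := StrictMono.orderIsoOfSurjective θ hθmono hθbij.surjective
    have hfun : Function.invFun θ = (e.symm : ℝ → ℝ) := by
      funext x
      apply hθbij.injective
      rw [hri x]
      have : θ (e.symm x) = e (e.symm x) := by
        rw [← StrictMono.coe_orderIsoOfSurjective θ hθmono hθbij.surjective]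
      rw [this, e.apply_symm_apply]
    rw [hfun]
    exact e.symm.continuous
  -- θ differs from theta0 by a constant
  have htheta0cont : Continuous (theta0 a) := by
    rw [continuous_iff_continuousAt]
    exact fun t => (theta0_hasDeriv ha t).differentiableAt.continuousAt
  have hdiff : ∀ t, ∃ k : ℤ, θ t - theta0 a t = 2 * Real.pi * k := by
    intro t
    have h1 : Complex.exp ((θ t : ℝ) * Complex.I)
        = Complex.exp ((theta0 a t : ℝ) * Complex.I) := by
      rw [hθ t, theta0_exp ha t]
    rw [Complex.exp_eq_exp_iff_exists_int] at h1
    obtain ⟨n, hn⟩ := h1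
    refine ⟨n, ?_⟩
    have him := congrArg Complex.im hn
    simp [Complex.mul_im, Complex.add_im, Complex.ofReal_im, Complex.ofReal_re] at him
    push_cast at him ⊢
    linarith
  have hconst : ∀ t, θ t - theta0 a t = θ 0 - theta0 a 0 :=
    const_of_int_valued (hθcont.sub htheta0cont) hdiff
  -- lower Lipschitz bound for θ
  set c : ℝ := (1 - r) / (1 + r) with hc
  have hc0 : 0 < c := by positivity
  have hmono0 : ∀ s t : ℝ, s ≤ t → c * (t - s) ≤ θ t - θ s := by
    have hg : Monotone (fun x => theta0 a x - c * x) := by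
      have hder : ∀ x : ℝ, HasDerivAt (fun x => theta0 a x - c * x)
          ((1 + 2 * ((starRingEnd ℂ) a * Complex.exp (x * Complex.I) /
            (1 - (starRingEnd ℂ) a * Complex.exp (x * Complex.I))).re) - c) x := by
        intro x
        exact (theta0_hasDeriv ha x).sub ((hasDerivAt_id x).const_mul c |>.congr_deriv
          (by ring))
      apply monotone_of_deriv_nonneg
      · exact fun x => (hder x).differentiableAt
      · intro x
        rw [(hder x).deriv]
        have hu : ‖(starRingEnd ℂ) a * Complex.exp (x * Complex.I)‖ = r := by
          simp [map_mul, Complex.norm_exp_ofReal_mul_I, hr]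
        have := deriv_lower ha _ hu
        rw [← hr] at this
        linarith
    intro s t hst
    have h1 := hg hst
    have h2 := hconst t
    have h3 := hconst s
    simp only at h1
    linarith
  -- periodicity of θ and of its inverse
  have hθper : ∀ t, θ (t + 2 * Real.pi) = θ t + 2 * Real.pi := by
    intro t
    have h1 := hconst (t + 2 * Real.pi)
    have h2 := hconst t
    rw [theta0_periodic] at h1
    linarith
  have hinvper : ∀ x, Function.invFun θ (x + 2 * Real.pi)
      = Function.invFun θ x + 2 * Real.pi := by
    intro x
    apply hθbij.injective
    rw [hri, hθper, hri]
  refine ⟨hf.comp hinv_cont, ?_, ?_⟩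
  · intro x
    simp only [Function.comp_apply]
    rw [hinvper x, hper]
  -- the modulus of continuity estimate
  intro δ hδ
  -- Lipschitz bound for the inverse
  have hlip : ∀ x y : ℝ, |Function.invFun θ x - Function.invFun θ y|
      ≤ (1 + r) / (1 - r) * |x - y| := by
    have key : ∀ x y : ℝ, Function.invFun θ y ≤ Function.invFun θ x →
        Function.invFun θ x - Function.invFun θ y ≤ (1 + r) / (1 - r) * |x - y| := by
      intro x y hle
      have h1 := hmono0 _ _ hle
      rw [hri x, hri y] at h1
      have h2 : x - y ≤ |x - y| := le_abs_self _
      have h3 : c * (Function.invFun θ x - Function.invFun θ y) ≤ |x - y| := by linarith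
      rw [← le_div_iff₀' hc0] at h3
      calc Function.invFun θ x - Function.invFun θ y ≤ |x - y| / c := h3
        _ = (1 + r) / (1 - r) * |x - y| := by
            rw [hc]; field_simp
    intro x y
    rcases le_total (Function.invFun θ y) (Function.invFun θ x) with hle | hle
    · rw [abs_of_nonneg (sub_nonneg.2 hle)]
      exact key x y hle
    · rw [abs_of_nonpos (sub_nonpos.2 hle), neg_sub, abs_sub_comm]
      exact key y x hle
  obtain ⟨M, hM⟩ := bdd_of_periodic f hf hper
  have hb := modContR_bddAbove hM δ
  have hw0 := modContR_nonneg hδ.le hb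
  set lam : ℝ := (1 + r) / (1 - r) with hlam
  have hlam1 : 1 ≤ lam := by rw [hlam, le_div_iff₀ hr1]; linarith
  have hlam0 : 0 ≤ lam := by linarith
  set n : ℕ := ⌈lam⌉₊ with hn
  have hnlam : lam ≤ (n:ℝ) := Nat.le_ceil lam
  have hn1 : (n:ℝ) ≤ lam + 1 := (Nat.ceil_lt_add_one hlam0).le
  rw [modContR]
  apply Real.sSup_le
  · rintro q ⟨x, y, hxy, rfl⟩
    simp only [Function.comp_apply]
    have hd : |Function.invFun θ x - Function.invFun θ y| ≤ (n:ℝ) * δ := by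
      calc |Function.invFun θ x - Function.invFun θ y| ≤ lam * |x - y| := hlip x y
        _ ≤ lam * δ := mul_le_mul_of_nonneg_left hxy hlam0
        _ ≤ (n:ℝ) * δ := mul_le_mul_of_nonneg_right hnlam hδ.le
    calc ‖f (Function.invFun θ x) - f (Function.invFun θ y)‖
        ≤ (n:ℝ) * modContR f δ := telescope hδ hb n _ _ hd
      _ ≤ (lam + 1) * modContR f δ := mul_le_mul_of_nonneg_right hn1 hw0
      _ = 2 / (1 - r) * modContR f δ := by
          congr 1
          rw [hlam]; field_simp; ring
  · exact mul_nonneg (by positivity) hw0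
end

section
/- Let a ∈ ℂ with |a| < 1, let θ : ℝ → ℝ be a continuous strictly increasing function with e^{iθ(t)} = τ_a(e^{it}) for all t ∈ ℝ, and let f ∈ C(𝕋). Then for every δ > 0, ((1 − |a|)/2)·ω(f, δ) ≤ ω(f ∘ θ^{−1}, δ). -/
lemma chord (s t : ℝ) :
    ‖Complex.exp (s * Complex.I) - Complex.exp (t * Complex.I)‖
      = 2 * |Real.sin ((s - t) / 2)| := by
  have h2 : ∀ z : ℂ, Complex.sin z * (2 * Complex.I)
      = Complex.exp (z * Complex.I) - Complex.exp (-z * Complex.I) := by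
    intro z
    rw [Complex.sin]
    have : Complex.I * Complex.I = -1 := Complex.I_mul_I
    field_simp
    ring_nf
    rw [Complex.I_sq]
    ring
  have key : Complex.exp ((s:ℂ) * Complex.I) - Complex.exp ((t:ℂ) * Complex.I)
      = Complex.exp ((((s+t)/2 : ℝ):ℂ) * Complex.I)
        * (Complex.sin ((((s-t)/2 : ℝ)):ℂ) * (2 * Complex.I)) := by
    rw [h2, mul_sub, ← Complex.exp_add, ← Complex.exp_add]
    push_cast
    ring_nf
  rw [key, norm_mul, norm_mul, Complex.norm_exp_ofReal_mul_I, one_mul,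
    ← Complex.ofReal_sin, Complex.norm_real, Real.norm_eq_abs, norm_mul, Complex.norm_two,
    Complex.norm_I, mul_one]
  ring

lemma tau_lip (a : ℂ) (ha : ‖a‖ < 1) (z w : ℂ)
    (hz : ‖z‖ = 1) (hw : ‖w‖ = 1) :
    ‖tauA a z - tauA a w‖
      ≤ (1 + ‖a‖) / (1 - ‖a‖) * ‖z - w‖ := by
  set A := ‖a‖ with hA
  have hA0 : 0 ≤ A := norm_nonneg a
  have hdz : ‖1 - (starRingEnd ℂ) a * z‖ ≥ 1 - A := by
    have := norm_sub_norm_le (1:ℂ) ((starRingEnd ℂ) a * z)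
    simpa [norm_mul, hz, ← hA] using this
  have hdw : ‖1 - (starRingEnd ℂ) a * w‖ ≥ 1 - A := by
    have := norm_sub_norm_le (1:ℂ) ((starRingEnd ℂ) a * w)
    simpa [norm_mul, hw, ← hA] using this
  have h1A : (0:ℝ) < 1 - A := by linarith
  have hz0 : (1 - (starRingEnd ℂ) a * z) ≠ 0 := by
    intro h
    rw [h] at hdz
    simp at hdz
    linarith
  have hw0 : (1 - (starRingEnd ℂ) a * w) ≠ 0 := by
    intro h
    rw [h] at hdw
    simp at hdw
    linarith
  have hid : tauA a z - tauA a w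
      = (1 - (starRingEnd ℂ) a * a) * (z - w)
        / ((1 - (starRingEnd ℂ) a * z) * (1 - (starRingEnd ℂ) a * w)) := by
    rw [tauA, tauA]
    rw [div_sub_div _ _ hz0 hw0]; congr 1
    ring
  have habs1 : ‖1 - (starRingEnd ℂ) a * a‖ = 1 - A^2 := by
    have : (starRingEnd ℂ) a * a = ((A^2 : ℝ) : ℂ) := by
      rw [mul_comm, Complex.mul_conj, hA, Complex.sq_norm]
    rw [this, ← Complex.ofReal_one, ← Complex.ofReal_sub, Complex.norm_real,
      Real.norm_eq_abs, abs_of_nonneg]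
    nlinarith
  rw [hid, norm_div, norm_mul, norm_mul, habs1]
  have h1 := mul_le_mul hdz hdw (by linarith) (norm_nonneg _)
  have hZ : 0 ≤ ‖z - w‖ := norm_nonneg _
  rw [div_le_iff₀ (lt_of_lt_of_le (by nlinarith) h1)]
  have key2 : (1+A)/(1-A) * ((1-A)*(1-A)) = (1-A^2) := by
    field_simp
    ring
  calc (1-A^2) * ‖z-w‖
      = (1+A)/(1-A) * ((1-A)*(1-A)) * ‖z-w‖ := by rw [key2]
    _ ≤ (1+A)/(1-A) * (‖1 - (starRingEnd ℂ) a * z‖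
          * ‖1 - (starRingEnd ℂ) a * w‖) * ‖z-w‖ := by
        apply mul_le_mul_of_nonneg_right _ hZ
        exact mul_le_mul_of_nonneg_left h1 (by positivity)
    _ = (1+A)/(1-A) * ‖z-w‖ * (‖1 - (starRingEnd ℂ) a * z‖
          * ‖1 - (starRingEnd ℂ) a * w‖) := by ring

lemma theta_chord (a : ℂ) (ha : ‖a‖ < 1) (θ : ℝ → ℝ)
    (hθ : ∀ t : ℝ, Complex.exp (θ t * Complex.I) = tauA a (Complex.exp (t * Complex.I)))
    (x y : ℝ) :
    |Real.sin ((θ x - θ y) / 2)|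
      ≤ (1 + ‖a‖) / (1 - ‖a‖) * |Real.sin ((x - y) / 2)| := by
  have h := tau_lip a ha _ _ (Complex.norm_exp_ofReal_mul_I x) (Complex.norm_exp_ofReal_mul_I y)
  rw [← hθ, ← hθ, chord, chord] at h
  have hL0 : 0 ≤ (1 + ‖a‖) / (1 - ‖a‖) := by
    have h0 := norm_nonneg a
    exact div_nonneg (by linarith) (by linarith)
  linarith

lemma theta_small (a : ℂ) (ha : ‖a‖ < 1) (θ : ℝ → ℝ)
    (hθcont : Continuous θ)
    (hθ : ∀ t : ℝ, Complex.exp (θ t * Complex.I) = tauA a (Complex.exp (t * Complex.I)))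
    (x y : ℝ) (hxy : x ≤ y)
    (hsmall : y - x < 2 / ((1 + ‖a‖) / (1 - ‖a‖))) :
    θ y - θ x < Real.pi := by
  set A := ‖a‖ with hA
  set L := (1 + A) / (1 - A) with hL
  have hA0 : 0 ≤ A := norm_nonneg a
  have h1A : (0:ℝ) < 1 - A := by linarith
  have hL1 : 1 ≤ L := by rw [hL, le_div_iff₀ h1A]; linarith
  have hLpos : (0:ℝ) < L := by linarith
  by_contra hcon
  push_neg at hcon
  have hmem : Real.pi ∈ Set.Icc (θ x - θ x) (θ y - θ x) := by
    constructor
    · simp [Real.pi_nonneg]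
    · exact hcon
  obtain ⟨s, hs, hsval⟩ :=
    intermediate_value_Icc hxy ((hθcont.sub continuous_const).continuousOn) hmem
  have hsval' : θ s - θ x = Real.pi := hsval
  have hc := theta_chord a ha θ hθ s x
  rw [hsval', Real.sin_pi_div_two] at hc
  have h1 : |Real.sin ((s - x)/2)| ≤ (s - x)/2 := by
    calc |Real.sin ((s - x)/2)| ≤ |(s - x)/2| := Real.abs_sin_le_abs
      _ = (s - x)/2 := abs_of_nonneg (by have := hs.1; linarith)
  have h2 : (s - x)/2 ≤ (y - x)/2 := by have := hs.2; linarith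
  have h3 : L * (y - x) < 2 := by
    rw [lt_div_iff₀ hLpos] at hsmall
    linarith
  simp only [abs_one] at hc
  nlinarith

lemma theta_local (a : ℂ) (ha : ‖a‖ < 1) (θ : ℝ → ℝ)
    (hθcont : Continuous θ) (hθmono : StrictMono θ)
    (hθ : ∀ t : ℝ, Complex.exp (θ t * Complex.I) = tauA a (Complex.exp (t * Complex.I)))
    {ε : ℝ} (hε : 0 < ε) :
    ∃ m > 0, ∀ x y : ℝ, x ≤ y → y - x ≤ m →
      θ y - θ x ≤ ((1 + ‖a‖) / (1 - ‖a‖) + ε) * (y - x) := by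
  set A := ‖a‖ with hA
  set L := (1 + A) / (1 - A) with hL
  have hA0 : 0 ≤ A := norm_nonneg a
  have h1A : (0:ℝ) < 1 - A := by linarith
  have hL1 : 1 ≤ L := by rw [hL, le_div_iff₀ h1A]; linarith
  have hLpos : (0:ℝ) < L := by linarith
  have hLε : (0:ℝ) < L + ε := by linarith
  refine ⟨min (1/(L+ε)) (Real.sqrt (ε/(L+ε)^3)), by positivity, ?_⟩
  intro x y hxy hm
  rcases eq_or_lt_of_le hxy with rfl | hlt
  · simp
  set r := (y - x)/2 with hr
  have hr0 : 0 < r := by rw [hr]; linarith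
  have hym : y - x ≤ 1/(L+ε) := le_trans hm (min_le_left _ _)
  have hym2 : y - x ≤ Real.sqrt (ε/(L+ε)^3) := le_trans hm (min_le_right _ _)
  have hsmall : y - x < 2 / L := by
    have h21 : 1/(L+ε) < 2/L := by
      rw [div_lt_div_iff₀ hLε hLpos]
      linarith
    linarith
  have hub : θ y - θ x < Real.pi := theta_small a ha θ hθcont hθ x y hxy hsmall
  set u := (θ y - θ x)/2 with hu
  have hu0 : 0 ≤ u := by
    have := hθmono.monotone hxy
    rw [hu]; linarith
  have huπ : u < Real.pi/2 := by rw [hu]; linarith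
  have hchord : Real.sin u ≤ L * r := by
    have h := theta_chord a ha θ hθ y x
    rw [← hu] at h
    rw [abs_of_nonneg (Real.sin_nonneg_of_nonneg_of_le_pi hu0
      (by linarith [Real.pi_pos]))] at h
    calc Real.sin u ≤ L * |Real.sin ((y-x)/2)| := h
      _ ≤ L * r := by
          apply mul_le_mul_of_nonneg_left _ hLpos.le
          calc |Real.sin ((y-x)/2)| ≤ |(y-x)/2| := Real.abs_sin_le_abs
            _ = r := by rw [abs_of_nonneg (by linarith)]
  set w := (L+ε)*r with hw
  have hw1 : w ≤ 1/2 := by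
    rw [hw, hr]
    calc (L+ε)*((y-x)/2) ≤ (L+ε)*(1/(L+ε)/2) := by
          apply mul_le_mul_of_nonneg_left _ hLε.le
          linarith
      _ = 1/2 := by field_simp
  have hw0 : 0 < w := by positivity
  have hr2 : (L+ε)^3 * r^2 ≤ ε := by
    have hQ : (0:ℝ) ≤ ε/(L+ε)^3 := by positivity
    have h2 : (y - x)^2 ≤ ε/(L+ε)^3 := by
      have hs := Real.sq_sqrt hQ
      nlinarith [Real.sqrt_nonneg (ε/(L+ε)^3)]
    rw [hr]
    have hp3 : (0:ℝ) < (L+ε)^3 := by positivity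
    rw [le_div_iff₀ hp3] at h2
    nlinarith
  have hsw : L * r < Real.sin w := by
    have hsg : w - w^3/4 < Real.sin w := by linarith [Real.sin_gt_sub_cube hw0, pow_pos hw0 3]
    have hcube : w^3/4 ≤ ε * r := by
      rw [hw]
      have : ((L+ε)*r)^3/4 = ((L+ε)^3 * r^2) * r / 4 := by ring
      rw [this]
      have hm1 : ((L+ε)^3 * r^2) * r ≤ ε * r := mul_le_mul_of_nonneg_right hr2 hr0.le
      have hP0 : (0:ℝ) ≤ ((L+ε)^3 * r^2) * r :=
        mul_nonneg (mul_nonneg (pow_nonneg hLε.le 3) (sq_nonneg r)) hr0.le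
      linarith
    have hww : w = L*r + ε*r := by rw [hw]; ring
    linarith
  have huw : u < w := by
    by_contra hcon
    push_neg at hcon
    have hmono := Real.strictMonoOn_sin.monotoneOn
      (Set.mem_Icc.2 ⟨by linarith, by linarith [Real.pi_gt_three]⟩)
      (Set.mem_Icc.2 ⟨by linarith, le_of_lt huπ⟩) hcon
    linarith
  have : θ y - θ x = 2*u := by rw [hu]; ring
  rw [this]
  have : (L + ε) * (y - x) = 2*w := by rw [hw, hr]; ring
  rw [this]
  linarith

lemma theta_lip (a : ℂ) (ha : ‖a‖ < 1) (θ : ℝ → ℝ)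
    (hθcont : Continuous θ) (hθmono : StrictMono θ)
    (hθ : ∀ t : ℝ, Complex.exp (θ t * Complex.I) = tauA a (Complex.exp (t * Complex.I)))
    (x y : ℝ) (hxy : x ≤ y) :
    θ y - θ x ≤ (1 + ‖a‖) / (1 - ‖a‖) * (y - x) := by
  set A := ‖a‖ with hA
  set L := (1 + A) / (1 - A) with hL
  apply le_of_forall_pos_le_add
  intro ε' hε'
  rcases eq_or_lt_of_le hxy with rfl | hlt
  · simp; linarith
  have hyx : (0:ℝ) < y - x := by linarith
  have hε0 : 0 < ε'/(y-x) := by positivity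
  obtain ⟨m, hm0, hloc⟩ := theta_local a ha θ hθcont hθmono hθ hε0
  set n := Nat.ceil ((y-x)/m) + 1 with hn
  have hn0 : 0 < n := Nat.succ_pos _
  have hnR : (0:ℝ) < (n:ℝ) := by exact_mod_cast hn0
  set h := (y - x)/(n:ℝ) with hh
  have hh0 : (0:ℝ) ≤ h := by positivity
  have hhm : h ≤ m := by
    rw [hh, div_le_iff₀ hnR]
    have hcl : (y-x)/m ≤ (n:ℝ) := by
      rw [hn]
      push_cast
      linarith [Nat.le_ceil ((y-x)/m)]
    calc y - x = ((y-x)/m)*m := by field_simp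
      _ ≤ (n:ℝ)*m := mul_le_mul_of_nonneg_right hcl hm0.le
      _ = m * (n:ℝ) := by ring
  have htel : ∑ k ∈ Finset.range n, (θ (x + ((k:ℕ)+1:ℕ)*h) - θ (x + (k:ℕ)*h))
      = θ y - θ x := by
    rw [Finset.sum_range_sub (fun k => θ (x + (k:ℕ)*h))]
    have h1 : x + (n:ℝ)*h = y := by
      rw [hh]
      field_simp; ring
    have h2 : x + ((0:ℕ):ℝ)*h = x := by simp
    rw [h1, h2]
  have hbound : ∀ k ∈ Finset.range n,
      θ (x + ((k:ℕ)+1:ℕ)*h) - θ (x + (k:ℕ)*h) ≤ (L + ε'/(y-x)) * h := by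
    intro k _
    have harg : (x + (((k:ℕ)+1:ℕ):ℝ)*h) - (x + (k:ℕ)*h) = h := by
      push_cast
      ring
    have := hloc (x + (k:ℕ)*h) (x + ((k:ℕ)+1:ℕ)*h) (by nlinarith) (by rw [harg]; exact hhm)
    rw [harg] at this
    exact this
  calc θ y - θ x = ∑ k ∈ Finset.range n, (θ (x + ((k:ℕ)+1:ℕ)*h) - θ (x + (k:ℕ)*h)) :=
        htel.symm
    _ ≤ ∑ _k ∈ Finset.range n, (L + ε'/(y-x)) * h := Finset.sum_le_sum hbound
    _ = (n:ℝ) * ((L + ε'/(y-x)) * h) := by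
        rw [Finset.sum_const, Finset.card_range, nsmul_eq_mul]
    _ = (L + ε'/(y-x)) * (y - x) := by
        rw [hh]
        field_simp
    _ = L * (y-x) + ε' := by field_simp

/-- Lemma 4, lower estimate. If `θ` is a continuous strictly
increasing branch of the nonlinear phase and `f ∈ C(𝕋)`, then
`((1 - |a|)/2) ω(f, δ) ≤ ω(f ∘ θ⁻¹, δ)`. -/
theorem modulus_of_continuity_comp_inv_phase_lower
    (a : ℂ) (ha : ‖a‖ < 1)
    (θ : ℝ → ℝ) (hθcont : Continuous θ) (hθmono : StrictMono θ)
    (hθ : ∀ t : ℝ, Complex.exp (θ t * Complex.I) =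
      tauA a (Complex.exp (t * Complex.I)))
    (hθbij : Function.Bijective θ)
    (f : ℝ → ℂ) (hf : Continuous f) (hper : ∀ x : ℝ, f (x + 2 * Real.pi) = f x) :
    ∀ δ : ℝ, 0 < δ →
      (1 - ‖a‖) / 2 * modContR f δ ≤
        modContR (f ∘ Function.invFun θ) δ := by
  intro δ hδ
  have hA0 : 0 ≤ ‖a‖ := norm_nonneg a
  set A := ‖a‖ with hA
  have h1A : (0:ℝ) < 1 - A := by linarith
  set L := (1 + A)/(1 - A) with hL
  have hL1 : 1 ≤ L := by rw [hL, le_div_iff₀ h1A]; linarith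
  have hL0 : (0:ℝ) ≤ L := by linarith
  set g := f ∘ Function.invFun θ with hg
  have hleft : Function.LeftInverse (Function.invFun θ) θ :=
    Function.leftInverse_invFun hθbij.1
  have hgθ : ∀ x, g (θ x) = f x := fun x => by
    simp only [hg, Function.comp_apply, hleft x]
  obtain ⟨M, hM⟩ : ∃ M, ∀ x, ‖f x‖ ≤ M := by
    obtain ⟨C, hC⟩ := (isCompact_Icc (a := (0:ℝ))
      (b := 2*Real.pi)).exists_bound_of_continuousOn hf.continuousOn
    refine ⟨C, fun x => ?_⟩
    have hperiodic : Function.Periodic f (2*Real.pi) := hper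
    obtain ⟨y, hy, hxy⟩ := hperiodic.exists_mem_Ico₀ (by positivity) x
    rw [hxy]
    simpa using hC y (Set.mem_Icc.2 ⟨hy.1, hy.2.le⟩)
  set Sg := {q : ℝ | ∃ x y : ℝ, |x - y| ≤ δ ∧ q = ‖g x - g y‖} with hSg
  have hbdd : BddAbove Sg := by
    refine ⟨2*M, ?_⟩
    rintro q ⟨x, y, -, rfl⟩
    have h1 : ‖g x‖ ≤ M := hM _
    have h2 : ‖g y‖ ≤ M := hM _
    calc ‖g x - g y‖ ≤ ‖g x‖ + ‖g y‖ := by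
          have := norm_sub_le (g x) (g y)
          simpa using this
      _ ≤ 2*M := by linarith
  have hmem0 : (0:ℝ) ∈ Sg := ⟨0, 0, by simp [hδ.le], by simp⟩
  have hW0 : 0 ≤ sSup Sg := le_csSup hbdd hmem0
  have step : ∀ s t : ℝ, |s - t| ≤ δ → ‖g s - g t‖ ≤ sSup Sg :=
    fun s t h => le_csSup hbdd ⟨s, t, h, rfl⟩
  have chain : ∀ n : ℕ, 0 < n → ∀ s t : ℝ, |s - t| ≤ n*δ →
      ‖g s - g t‖ ≤ n * sSup Sg := by
    intro n hn s t hst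
    have hnR : (0:ℝ) < (n:ℝ) := by exact_mod_cast hn
    set hstep := (t - s)/(n:ℝ) with hhstep
    have hkey : ∑ k ∈ Finset.range n,
        (g (s + ((k+1:ℕ):ℝ)*hstep) - g (s + ((k:ℕ):ℝ)*hstep)) = g t - g s := by
      rw [Finset.sum_range_sub (fun k => g (s + ((k:ℕ):ℝ)*hstep))]
      have h1 : s + (n:ℝ)*hstep = t := by
        rw [hhstep]; field_simp; ring
      have h2 : s + ((0:ℕ):ℝ)*hstep = s := by simp
      rw [h1, h2]
    have habs : ‖g s - g t‖ = ‖g t - g s‖ :=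
      norm_sub_rev _ _
    rw [habs, ← hkey]
    calc ‖∑ k ∈ Finset.range n,
          (g (s + ((k+1:ℕ):ℝ)*hstep) - g (s + ((k:ℕ):ℝ)*hstep))‖
        ≤ ∑ k ∈ Finset.range n,
          ‖g (s + ((k+1:ℕ):ℝ)*hstep) - g (s + ((k:ℕ):ℝ)*hstep)‖ :=
          norm_sum_le _ _
      _ ≤ ∑ _k ∈ Finset.range n, sSup Sg := by
          apply Finset.sum_le_sum
          intro k _
          apply step
          have harg : (s + ((k+1:ℕ):ℝ)*hstep) - (s + ((k:ℕ):ℝ)*hstep) = hstep := by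
            push_cast; ring
          rw [harg, hhstep, abs_div]
          rw [div_le_iff₀ (by rwa [abs_of_pos hnR])]
          calc |t - s| = |s - t| := abs_sub_comm t s
            _ ≤ n*δ := hst
            _ = δ * |(n:ℝ)| := by rw [abs_of_pos hnR]; ring
      _ = n * sSup Sg := by rw [Finset.sum_const, Finset.card_range, nsmul_eq_mul]
  have hlip : ∀ x y : ℝ, |θ x - θ y| ≤ L * |x - y| := by
    intro x y
    rcases le_total x y with h | h
    · have h1 := theta_lip a ha θ hθcont hθmono hθ x y h
      have h2 : θ x ≤ θ y := hθmono.monotone h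
      rw [abs_sub_comm, abs_of_nonneg (by linarith), abs_sub_comm, abs_of_nonneg (by linarith)]
      exact h1
    · have h1 := theta_lip a ha θ hθcont hθmono hθ y x h
      have h2 : θ y ≤ θ x := hθmono.monotone h
      rw [abs_of_nonneg (by linarith), abs_of_nonneg (by linarith)]
      exact h1
  set n := ⌈L⌉₊ with hn
  have hn0 : 0 < n := Nat.ceil_pos.2 (by linarith)
  have hnL : L ≤ (n:ℝ) := Nat.le_ceil L
  have hn1 : (n:ℝ) ≤ L + 1 := (Nat.ceil_lt_add_one hL0).le
  have hfbound : ∀ q ∈ {q : ℝ | ∃ x y : ℝ, |x - y| ≤ δ ∧ q = ‖f x - f y‖},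
      q ≤ (L+1) * sSup Sg := by
    rintro q ⟨x, y, hxy, rfl⟩
    have hq : |θ x - θ y| ≤ n * δ := by
      calc |θ x - θ y| ≤ L * |x - y| := hlip x y
        _ ≤ L * δ := mul_le_mul_of_nonneg_left hxy hL0
        _ ≤ n * δ := mul_le_mul_of_nonneg_right hnL hδ.le
    have hch := chain n hn0 (θ x) (θ y) hq
    rw [hgθ, hgθ] at hch
    calc ‖f x - f y‖ ≤ n * sSup Sg := hch
      _ ≤ (L+1) * sSup Sg := mul_le_mul_of_nonneg_right hn1 hW0
  have hωf : modContR f δ ≤ (L+1) * sSup Sg :=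
    csSup_le ⟨0, 0, 0, by simp [hδ.le], by simp⟩ hfbound
  have hfactor : (1-A)/2 * (L+1) = 1 := by
    rw [hL]; field_simp; ring
  have hgW : modContR g δ = sSup Sg := rfl
  calc (1-A)/2 * modContR f δ ≤ (1-A)/2 * ((L+1) * sSup Sg) :=
        mul_le_mul_of_nonneg_left hωf (by linarith)
    _ = ((1-A)/2 * (L+1)) * sSup Sg := by ring
    _ = sSup Sg := by rw [hfactor, one_mul]
    _ = modContR g δ := hgW.symm
end

section
/- Let a ∈ ℂ with |a| < 1. Then for all integers k, m, (1/2π)∫₀^{2π} τ_a(e^{it})^k · conj(τ_a(e^{it}))^m · p_a(t) dt equals 1 if k = m and 0 otherwise; that is, the system {t ↦ τ_a(e^{it})^k : k ∈ ℤ} is orthonormal with respect to the inner product ⟨f, g⟩_a = (1/2π)∫₀^{2π} f(t)·conj(g(t))·p_a(t) dt. -/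
open Complex intervalIntegral Real

/-- The weight `p_a(t) = (1 - |a|²)/|1 - conj a · e^{it}|²`. -/
noncomputable def pA (a : ℂ) (t : ℝ) : ℝ :=
  (1 - ‖a‖ ^ 2) / ‖1 - (starRingEnd ℂ) a * Complex.exp (t * Complex.I)‖ ^ 2

namespace NFB

lemma abs_z (t : ℝ) : ‖Complex.exp (t * Complex.I)‖ = 1 := by
  simpa using Complex.norm_exp_ofReal_mul_I t

lemma conj_z (t : ℝ) :
    (starRingEnd ℂ) (Complex.exp (t * Complex.I)) = Complex.exp (-(t * Complex.I)) := by
  rw [← Complex.exp_conj]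
  congr 1
  simp [map_mul, Complex.conj_I, Complex.conj_ofReal]

lemma z_mul_zneg (t : ℝ) :
    Complex.exp (t * Complex.I) * Complex.exp (-(t * Complex.I)) = 1 := by
  rw [← Complex.exp_add]; simp

lemma zneg_eq_inv (t : ℝ) :
    Complex.exp (-(t * Complex.I)) = (Complex.exp (t * Complex.I))⁻¹ :=
  Complex.exp_neg _

lemma hasDerivAt_z (t : ℝ) :
    HasDerivAt (fun s : ℝ => Complex.exp (s * Complex.I))
      (Complex.I * Complex.exp (t * Complex.I)) t := by
  have h1 : HasDerivAt (fun w : ℂ => Complex.exp (w * Complex.I))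
      (Complex.exp ((t : ℂ) * Complex.I) * Complex.I) (t : ℂ) :=
    (Complex.hasDerivAt_exp _).comp _ (hasDerivAt_mul_const Complex.I)
  have := h1.comp_ofReal
  simpa [mul_comm] using this

lemma hasDerivAt_zneg (t : ℝ) :
    HasDerivAt (fun s : ℝ => Complex.exp (-(s * Complex.I)))
      (-Complex.I * Complex.exp (-(t * Complex.I))) t := by
  have h1 : HasDerivAt (fun w : ℂ => Complex.exp (-(w * Complex.I)))
      (Complex.exp (-((t : ℂ) * Complex.I)) * -Complex.I) (t : ℂ) :=
    (Complex.hasDerivAt_exp _).comp _ ((hasDerivAt_mul_const Complex.I).neg)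
  have := h1.comp_ofReal
  simpa [mul_comm] using this

variable {a : ℂ} (ha : ‖a‖ < 1)

include ha

lemma denom_ne (t : ℝ) : 1 - (starRingEnd ℂ) a * Complex.exp (t * Complex.I) ≠ 0 := by
  intro h
  have h1 : (starRingEnd ℂ) a * Complex.exp (t * Complex.I) = 1 := (sub_eq_zero.mp h).symm
  have : ‖(starRingEnd ℂ) a * Complex.exp (t * Complex.I)‖ = 1 := by
    rw [h1]; simp
  rw [norm_mul, Complex.norm_conj, abs_z, mul_one] at this
  exact absurd this (ne_of_lt ha)

lemma num_ne (t : ℝ) : Complex.exp (t * Complex.I) - a ≠ 0 := by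
  intro h
  have : Complex.exp (t * Complex.I) = a := sub_eq_zero.mp h
  rw [← this, abs_z] at ha
  exact lt_irrefl _ ha

lemma tau_ne (t : ℝ) : tauA a (Complex.exp (t * Complex.I)) ≠ 0 :=
  div_ne_zero (num_ne ha t) (denom_ne ha t)

omit ha in
lemma conj_denom (t : ℝ) :
    (starRingEnd ℂ) (1 - (starRingEnd ℂ) a * Complex.exp (t * Complex.I)) =
      1 - a * Complex.exp (-(t * Complex.I)) := by
  rw [map_sub, map_one, map_mul, Complex.conj_conj, conj_z]

lemma denom2_ne (t : ℝ) : 1 - a * Complex.exp (-(t * Complex.I)) ≠ 0 := by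
  rw [← conj_denom]
  intro hc
  exact denom_ne ha t (by simpa using congrArg (starRingEnd ℂ) hc)

omit ha in
lemma pA_complex (t : ℝ) :
    (pA a t : ℂ) = (1 - a * (starRingEnd ℂ) a) /
      ((1 - (starRingEnd ℂ) a * Complex.exp (t * Complex.I)) *
        (1 - a * Complex.exp (-(t * Complex.I)))) := by
  have h1 : ((‖a‖ ^ 2 : ℝ) : ℂ) = a * (starRingEnd ℂ) a := by
    rw [← Complex.normSq_eq_norm_sq, Complex.mul_conj]
  have h2 : ((‖1 - (starRingEnd ℂ) a * Complex.exp (t * Complex.I)‖ ^ 2 : ℝ) : ℂ)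
      = (1 - (starRingEnd ℂ) a * Complex.exp (t * Complex.I)) *
          (1 - a * Complex.exp (-(t * Complex.I))) := by
    rw [← Complex.normSq_eq_norm_sq, ← Complex.mul_conj, conj_denom]
  rw [pA, Complex.ofReal_div, h2, Complex.ofReal_sub, Complex.ofReal_one, h1]

lemma abs_tau (t : ℝ) : ‖tauA a (Complex.exp (t * Complex.I))‖ = 1 := by
  have key : Complex.exp (t * Complex.I) - a =
      Complex.exp (t * Complex.I) *
        (starRingEnd ℂ) (1 - (starRingEnd ℂ) a * Complex.exp (t * Complex.I)) := by
    rw [conj_denom, mul_sub, mul_one, mul_comm a, ← mul_assoc, z_mul_zneg, one_mul]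
  rw [tauA, norm_div, key, norm_mul, abs_z, one_mul, Complex.norm_conj,
    div_self (by simpa using (norm_ne_zero_iff.mpr (denom_ne ha t)))]

lemma conj_tau (t : ℝ) :
    (starRingEnd ℂ) (tauA a (Complex.exp (t * Complex.I))) =
      (tauA a (Complex.exp (t * Complex.I)))⁻¹ := by
  have h : tauA a (Complex.exp (t * Complex.I)) *
      (starRingEnd ℂ) (tauA a (Complex.exp (t * Complex.I))) = 1 := by
    rw [Complex.mul_conj, Complex.normSq_eq_norm_sq, abs_tau ha, one_pow, Complex.ofReal_one]
  exact eq_inv_of_mul_eq_one_left (by rw [mul_comm] at h; exact h)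

lemma hasDerivAt_tau (t : ℝ) :
    HasDerivAt (fun s : ℝ => tauA a (Complex.exp (s * Complex.I)))
      (Complex.I * tauA a (Complex.exp (t * Complex.I)) * (pA a t : ℂ)) t := by
  have hznum : HasDerivAt (fun s : ℝ => Complex.exp (s * Complex.I) - a)
      (Complex.I * Complex.exp (t * Complex.I)) t := (hasDerivAt_z t).sub_const a
  have hzden : HasDerivAt
      (fun s : ℝ => 1 - (starRingEnd ℂ) a * Complex.exp (s * Complex.I))
      (-((starRingEnd ℂ) a * (Complex.I * Complex.exp (t * Complex.I)))) t :=
    ((hasDerivAt_z t).const_mul ((starRingEnd ℂ) a)).const_sub 1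
  have hd := hznum.div hzden (denom_ne ha t)
  have key : (Complex.I * Complex.exp (t * Complex.I) *
        (1 - (starRingEnd ℂ) a * Complex.exp (t * Complex.I)) -
        (Complex.exp (t * Complex.I) - a) *
          -((starRingEnd ℂ) a * (Complex.I * Complex.exp (t * Complex.I)))) /
        (1 - (starRingEnd ℂ) a * Complex.exp (t * Complex.I)) ^ 2 =
      Complex.I * tauA a (Complex.exp (t * Complex.I)) * (pA a t : ℂ) := by
    rw [pA_complex, tauA, zneg_eq_inv]
    have h1 := denom_ne ha t
    have h2 := num_ne ha t
    have h3 : Complex.exp (t * Complex.I) ≠ 0 := Complex.exp_ne_zero _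
    have h4 : 1 - a * (Complex.exp (t * Complex.I))⁻¹ ≠ 0 := by
      rw [← zneg_eq_inv]; exact denom2_ne ha t
    generalize Complex.exp (t * Complex.I) = z at h1 h2 h3 h4 ⊢
    rw [show 1 - a * z⁻¹ = (z - a) / z by field_simp]
    field_simp
    ring
  exact key ▸ hd

/-- derivative of `τ^n` along the circle. -/
lemma hasDerivAt_tau_zpow (n : ℤ) (t : ℝ) :
    HasDerivAt (fun s : ℝ => tauA a (Complex.exp (s * Complex.I)) ^ n)
      ((n : ℂ) * Complex.I * tauA a (Complex.exp (t * Complex.I)) ^ n * (pA a t : ℂ)) t := by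
  have h := (hasDerivAt_zpow n _ (Or.inl (tau_ne ha t))).comp t (hasDerivAt_tau ha t)
  have : (n : ℂ) * tauA a (Complex.exp (t * Complex.I)) ^ (n - 1) *
      (Complex.I * tauA a (Complex.exp (t * Complex.I)) * (pA a t : ℂ)) =
      (n : ℂ) * Complex.I * tauA a (Complex.exp (t * Complex.I)) ^ n * (pA a t : ℂ) := by
    rw [zpow_sub_one₀ (tau_ne ha t)]
    field_simp [tau_ne ha t]
  exact this ▸ h

omit ha in
lemma cont_z : Continuous fun t : ℝ => Complex.exp (t * Complex.I) := by
  fun_prop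

lemma cont_tau : Continuous fun t : ℝ => tauA a (Complex.exp (t * Complex.I)) := by
  unfold tauA
  exact (cont_z.sub continuous_const).div
    (continuous_const.sub (continuous_const.mul cont_z)) (fun t => denom_ne ha t)

lemma cont_pA : Continuous fun t : ℝ => (pA a t : ℂ) := by
  apply Complex.continuous_ofReal.comp
  unfold pA
  apply Continuous.div continuous_const
  · exact ((continuous_norm.comp
      (continuous_const.sub (continuous_const.mul cont_z))).pow 2)
  · intro t
    exact pow_ne_zero 2 (by simpa using norm_ne_zero_iff.mpr (denom_ne ha t))

lemma cont_integrand (n : ℤ) :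
    Continuous fun t : ℝ => tauA a (Complex.exp (t * Complex.I)) ^ n * (pA a t : ℂ) := by
  exact ((cont_tau ha).zpow₀ n (fun t => Or.inl (tau_ne ha t))).mul (cont_pA ha)

omit ha in
lemma tau_two_pi : tauA a (Complex.exp ((2 * Real.pi : ℝ) * Complex.I)) =
    tauA a (Complex.exp ((0 : ℝ) * Complex.I)) := by
  congr 1
  rw [show ((2 * Real.pi : ℝ) : ℂ) * Complex.I = 2 * Real.pi * Complex.I by push_cast; ring,
    Complex.exp_two_pi_mul_I]
  simp

/-- integral of `τ^n · p` for `n ≠ 0`. -/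
lemma integral_zpow_ne (n : ℤ) (hn : n ≠ 0) :
    ∫ t in (0:ℝ)..(2 * Real.pi),
      tauA a (Complex.exp (t * Complex.I)) ^ n * (pA a t : ℂ) = 0 := by
  have hni : ((n : ℂ) * Complex.I) ≠ 0 :=
    mul_ne_zero (Int.cast_ne_zero.mpr hn) Complex.I_ne_zero
  have hderiv : ∀ t ∈ Set.uIcc (0:ℝ) (2 * Real.pi),
      HasDerivAt (fun s : ℝ => ((n : ℂ) * Complex.I)⁻¹ *
          tauA a (Complex.exp (s * Complex.I)) ^ n)
        (tauA a (Complex.exp (t * Complex.I)) ^ n * (pA a t : ℂ)) t := by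
    intro t _
    have h := (hasDerivAt_tau_zpow ha n t).const_mul (((n : ℂ) * Complex.I)⁻¹)
    have : ((n : ℂ) * Complex.I)⁻¹ *
        ((n : ℂ) * Complex.I * tauA a (Complex.exp (t * Complex.I)) ^ n * (pA a t : ℂ)) =
        tauA a (Complex.exp (t * Complex.I)) ^ n * (pA a t : ℂ) := by
      field_simp
    exact this ▸ h
  rw [intervalIntegral.integral_eq_sub_of_hasDerivAt hderiv
    ((cont_integrand ha n).intervalIntegrable _ _)]
  rw [tau_two_pi]
  ring

/-- integral of the weight alone. -/
lemma integral_pA :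
    ∫ t in (0:ℝ)..(2 * Real.pi), (pA a t : ℂ) = 2 * Real.pi := by
  set Φ : ℝ → ℂ := fun t => (t : ℂ) +
    Complex.I * Complex.log (1 - (starRingEnd ℂ) a * Complex.exp (t * Complex.I)) -
    Complex.I * Complex.log (1 - a * Complex.exp (-(t * Complex.I))) with hΦ
  have hmem1 : ∀ t : ℝ, (1 - (starRingEnd ℂ) a * Complex.exp (t * Complex.I)) ∈
      Complex.slitPlane := by
    intro t
    apply Or.inl
    have h1 : ((starRingEnd ℂ) a * Complex.exp (t * Complex.I)).re ≤
        ‖(starRingEnd ℂ) a * Complex.exp (t * Complex.I)‖ := Complex.re_le_norm _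
    rw [norm_mul, Complex.norm_conj, abs_z, mul_one] at h1
    have : (1 - (starRingEnd ℂ) a * Complex.exp (t * Complex.I)).re =
        1 - ((starRingEnd ℂ) a * Complex.exp (t * Complex.I)).re := by simp
    rw [this]; linarith
  have hmem2 : ∀ t : ℝ, (1 - a * Complex.exp (-(t * Complex.I))) ∈ Complex.slitPlane := by
    intro t
    apply Or.inl
    have h1 : (a * Complex.exp (-(t * Complex.I))).re ≤
        ‖a * Complex.exp (-(t * Complex.I))‖ := Complex.re_le_norm _
    have habs : ‖Complex.exp (-(t * Complex.I))‖ = 1 := by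
      rw [zneg_eq_inv, norm_inv, abs_z]; norm_num
    rw [norm_mul, habs, mul_one] at h1
    have : (1 - a * Complex.exp (-(t * Complex.I))).re =
        1 - (a * Complex.exp (-(t * Complex.I))).re := by simp
    rw [this]; linarith
  have hderiv : ∀ t ∈ Set.uIcc (0:ℝ) (2 * Real.pi), HasDerivAt Φ ((pA a t : ℂ)) t := by
    intro t _
    have hd1 : HasDerivAt (fun s : ℝ => 1 - (starRingEnd ℂ) a * Complex.exp (s * Complex.I))
        (-((starRingEnd ℂ) a * (Complex.I * Complex.exp (t * Complex.I)))) t :=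
      ((hasDerivAt_z t).const_mul _).const_sub 1
    have hd2 : HasDerivAt (fun s : ℝ => 1 - a * Complex.exp (-(s * Complex.I)))
        (-(a * (-Complex.I * Complex.exp (-(t * Complex.I))))) t :=
      ((hasDerivAt_zneg t).const_mul a).const_sub 1
    have hl1 := ((Complex.hasDerivAt_log (hmem1 t)).comp t hd1).const_mul Complex.I
    have hl2 := ((Complex.hasDerivAt_log (hmem2 t)).comp t hd2).const_mul Complex.I
    have hid : HasDerivAt (fun s : ℝ => (s : ℂ)) 1 t := by
      simpa using (hasDerivAt_id t).ofReal_comp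
    have h := (hid.add hl1).sub hl2
    have heq : 1 + Complex.I * ((1 - (starRingEnd ℂ) a * Complex.exp (t * Complex.I))⁻¹ *
          -((starRingEnd ℂ) a * (Complex.I * Complex.exp (t * Complex.I)))) -
        Complex.I * ((1 - a * Complex.exp (-(t * Complex.I)))⁻¹ *
          -(a * (-Complex.I * Complex.exp (-(t * Complex.I))))) = (pA a t : ℂ) := by
      rw [pA_complex, zneg_eq_inv]
      have h1 := denom_ne ha t
      have h2 := num_ne ha t
      have h3 : Complex.exp (t * Complex.I) ≠ 0 := Complex.exp_ne_zero _
      have h4 : 1 - a * (Complex.exp (t * Complex.I))⁻¹ ≠ 0 := by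
        rw [← zneg_eq_inv]; exact denom2_ne ha t
      generalize Complex.exp (t * Complex.I) = z at h1 h2 h3 h4 ⊢
      rw [show 1 - a * z⁻¹ = (z - a) / z by field_simp]
      field_simp
      ring_nf
      simp [Complex.I_sq]
      ring
    exact heq ▸ h
  rw [intervalIntegral.integral_eq_sub_of_hasDerivAt hderiv
    ((cont_pA ha).intervalIntegrable _ _)]
  have e2 : Complex.exp (((2 * Real.pi : ℝ) : ℂ) * Complex.I) = 1 := by
    rw [show ((2 * Real.pi : ℝ) : ℂ) * Complex.I = 2 * Real.pi * Complex.I by push_cast; ring,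
      Complex.exp_two_pi_mul_I]
  have e2' : Complex.exp (-(((2 * Real.pi : ℝ) : ℂ) * Complex.I)) = 1 := by
    rw [Complex.exp_neg, e2]; norm_num
  have hz2 : Complex.exp (((2 * Real.pi : ℝ) : ℂ) * Complex.I) =
      Complex.exp (((0 : ℝ) : ℂ) * Complex.I) := by rw [e2]; simp
  have hz2' : Complex.exp (-(((2 * Real.pi : ℝ) : ℂ) * Complex.I)) =
      Complex.exp (-(((0 : ℝ) : ℂ) * Complex.I)) := by
    rw [e2']; simp
  simp only [hΦ, hz2, hz2']
  push_cast
  ring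

lemma integral_zpow (n : ℤ) :
    ∫ t in (0:ℝ)..(2 * Real.pi),
      tauA a (Complex.exp (t * Complex.I)) ^ n * (pA a t : ℂ) =
      if n = 0 then (2 * Real.pi : ℂ) else 0 := by
  by_cases hn : n = 0
  · subst hn
    simp only [zpow_zero, one_mul, if_true]
    exact integral_pA ha
  · rw [if_neg hn]
    exact integral_zpow_ne ha n hn

end NFB

/-- The system `{τ_a(e^{it})^k : k ∈ ℤ}` is orthonormal with
respect to the inner product `⟨f, g⟩_a = (1/2π)∫₀^{2π} f(t) conj(g(t)) p_a(t) dt`. -/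
theorem nonlinear_fourier_basis_orthonormal (a : ℂ) (ha : ‖a‖ < 1)
    (k m : ℤ) :
    (1 / (2 * Real.pi) : ℂ) * ∫ t in (0:ℝ)..(2 * Real.pi),
        (tauA a (Complex.exp (t * Complex.I))) ^ k *
          (starRingEnd ℂ) ((tauA a (Complex.exp (t * Complex.I))) ^ m) * (pA a t : ℂ) =
      if k = m then 1 else 0 := by
  have hint : ∀ t : ℝ,
      (tauA a (Complex.exp (t * Complex.I))) ^ k *
        (starRingEnd ℂ) ((tauA a (Complex.exp (t * Complex.I))) ^ m) * (pA a t : ℂ) =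
      (tauA a (Complex.exp (t * Complex.I))) ^ (k - m) * (pA a t : ℂ) := by
    intro t
    rw [map_zpow₀, NFB.conj_tau ha, inv_zpow, ← zpow_neg,
      ← zpow_add₀ (NFB.tau_ne ha t), sub_eq_add_neg]
  simp only [hint]
  rw [NFB.integral_zpow ha (k - m)]
  have hpi : (2 * Real.pi : ℂ) ≠ 0 := by
    simp [Real.pi_ne_zero]
  by_cases h : k = m
  · rw [if_pos (sub_eq_zero.mpr h), if_pos h]
    field_simp
  · rw [if_neg (fun hh => h (sub_eq_zero.mp hh)), if_neg h]
    ring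
end

section
/- Let a ∈ ℂ with |a| < 1 and let θ : ℝ → ℝ be a continuous strictly increasing function with e^{iθ(t)} = τ_a(e^{it}) for all t ∈ ℝ. Then θ is differentiable and θ′(t) = p_a(t) for every t ∈ ℝ, where p_a(t) = (1 − |a|²)/|1 − conj(a)·e^{it}|². -/
lemma den_ne (a : ℂ) (ha : ‖a‖ < 1) (t : ℝ) :
    1 - (starRingEnd ℂ) a * Complex.exp (t * Complex.I) ≠ 0 := by
  intro h
  have h1 : ‖(starRingEnd ℂ) a * Complex.exp (t * Complex.I)‖ = ‖a‖ := by
    simp [Complex.norm_exp_ofReal_mul_I]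
  have : (starRingEnd ℂ) a * Complex.exp (t * Complex.I) = 1 := by linear_combination -h
  rw [this] at h1; simp at h1; linarith [ha]

lemma num_ne (a : ℂ) (ha : ‖a‖ < 1) (t : ℝ) :
    Complex.exp (t * Complex.I) - a ≠ 0 := by
  intro h
  have : Complex.exp (t * Complex.I) = a := by linear_combination h
  have h2 := congrArg (‖·‖) this
  rw [Complex.norm_exp_ofReal_mul_I] at h2
  linarith

lemma hasDerivAt_g (a : ℂ) (ha : ‖a‖ < 1) (t : ℝ) :
    HasDerivAt (fun s : ℝ => tauA a (Complex.exp (s * Complex.I)))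
      ((pA a t : ℂ) * Complex.I * tauA a (Complex.exp (t * Complex.I))) t := by
  set z := Complex.exp (t * Complex.I) with hz
  have hzexp : HasDerivAt (fun s : ℝ => Complex.exp (s * Complex.I)) (z * Complex.I) t := by
    have h1 : HasDerivAt (fun s : ℝ => (s : ℂ) * Complex.I) Complex.I t := by
      simpa using ((hasDerivAt_id t).ofReal_comp.mul_const Complex.I)
    simpa [hz] using h1.cexp
  have hnum : HasDerivAt (fun s : ℝ => Complex.exp (s * Complex.I) - a) (z * Complex.I) t :=
    hzexp.sub_const a
  have hden : HasDerivAt (fun s : ℝ => 1 - (starRingEnd ℂ) a * Complex.exp (s * Complex.I))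
      (-((starRingEnd ℂ) a * (z * Complex.I))) t := by
    simpa using ((hzexp.const_mul ((starRingEnd ℂ) a)).const_sub 1)
  have hD := hnum.div hden (den_ne a ha t)
  have heq : (z * Complex.I * (1 - (starRingEnd ℂ) a * z) -
        (z - a) * -((starRingEnd ℂ) a * (z * Complex.I))) /
        (1 - (starRingEnd ℂ) a * z) ^ 2
      = (pA a t : ℂ) * Complex.I * tauA a z := by
    have hd := den_ne a ha t
    have hcd : 1 - a * (starRingEnd ℂ) z ≠ 0 := by
      have := (map_ne_zero (starRingEnd ℂ)).mpr hd
      simpa using this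
    have hzz : z * (starRingEnd ℂ) z = 1 := by
      rw [Complex.mul_conj, Complex.normSq_eq_norm_sq, Complex.norm_exp_ofReal_mul_I]; norm_num
    have haa : a * (starRingEnd ℂ) a = ((‖a‖ ^ 2 : ℝ) : ℂ) := by
      rw [Complex.mul_conj, Complex.sq_norm]
    have habs : ((‖1 - (starRingEnd ℂ) a * z‖ : ℝ) : ℂ) ^ 2
        = (1 - (starRingEnd ℂ) a * z) * (starRingEnd ℂ) (1 - (starRingEnd ℂ) a * z) := by
      norm_cast
      rw [Complex.sq_norm, Complex.mul_conj]
    unfold pA tauA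
    push_cast
    have hc : (starRingEnd ℂ) (1 - (starRingEnd ℂ) a * z) = 1 - a * (starRingEnd ℂ) z := by
      simp
    have haa' : a * (starRingEnd ℂ) a = ((‖a‖ : ℝ) : ℂ) ^ 2 := by
      rw [haa]; push_cast; ring
    have hza : z - a = z * (1 - a * (starRingEnd ℂ) z) := by linear_combination a * hzz
    have hnumeq : z * Complex.I * (1 - (starRingEnd ℂ) a * z) -
        (z - a) * -((starRingEnd ℂ) a * (z * Complex.I))
        = (1 - ((‖a‖ : ℝ) : ℂ) ^ 2) * Complex.I * z := by
      linear_combination (-Complex.I * z) * haa'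
    rw [← hz, habs, hc, hnumeq, hza]
    field_simp
  rw [← heq]
  exact hD

/-- A continuous strictly increasing branch `θ` of the
nonlinear phase is differentiable with `θ'(t) = p_a(t)`. -/
theorem phase_hasDerivAt (a : ℂ) (ha : ‖a‖ < 1)
    (θ : ℝ → ℝ) (hθcont : Continuous θ) (hθmono : StrictMono θ)
    (hθ : ∀ t : ℝ, Complex.exp (θ t * Complex.I) =
      tauA a (Complex.exp (t * Complex.I))) :
    ∀ t : ℝ, HasDerivAt θ (pA a t) t := by
  intro t₀
  set g : ℝ → ℂ := fun s => tauA a (Complex.exp (s * Complex.I)) with hgdef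
  have hgabs : ∀ t, ‖g t‖ = 1 := by
    intro t
    rw [hgdef]
    simp only
    rw [← hθ t, Complex.norm_exp_ofReal_mul_I]
  have hg0 : g t₀ ≠ 0 := by
    intro h0
    have := hgabs t₀
    rw [h0] at this
    simp at this
  set h : ℝ → ℂ := fun s => g s / g t₀ with hhdef
  have hhabs : ∀ t, ‖h t‖ = 1 := by
    intro t; rw [hhdef]; simp [norm_div, hgabs]
  have hh0 : ∀ t, h t ≠ 0 := by
    intro t h0
    have := hhabs t; rw [h0] at this; simp at this
  have hht0 : h t₀ = 1 := div_self hg0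
  have hh : HasDerivAt h ((pA a t₀ : ℂ) * Complex.I * g t₀ / g t₀) t₀ :=
    (hasDerivAt_g a ha t₀).div_const _
  have hL : HasDerivAt (fun s => Complex.log (h s)) ((pA a t₀ : ℂ) * Complex.I) t₀ := by
    have hmem : h t₀ ∈ Complex.slitPlane := by
      rw [hht0]; exact Complex.one_mem_slitPlane
    have := hh.clog_real hmem
    rw [hht0] at this
    convert this using 1
    field_simp
  have hIm : HasDerivAt (fun s => θ t₀ + (Complex.log (h s)).im) (pA a t₀) t₀ := by
    have h1 := Complex.imCLM.hasFDerivAt.comp_hasDerivAt t₀ hL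
    have h2 : Complex.imCLM ((pA a t₀ : ℂ) * Complex.I) = pA a t₀ := by
      simp [Complex.mul_I_im]
    rw [h2] at h1
    exact h1.const_add (θ t₀)
  apply hIm.congr_of_eventuallyEq
  have hcont : ∀ᶠ s in nhds t₀, |θ s - θ t₀| < Real.pi := by
    have htd : Filter.Tendsto (fun s => θ s - θ t₀) (nhds t₀) (nhds (θ t₀ - θ t₀)) :=
      (hθcont.tendsto t₀).sub tendsto_const_nhds
    rw [sub_self] at htd
    have := htd.eventually (eventually_abs_sub_lt 0 Real.pi_pos)
    simpa using this
  filter_upwards [hcont] with s hs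
  -- show θ s = θ t₀ + (log (h s)).im
  have hexp : Complex.exp ((θ s - θ t₀ : ℝ) * Complex.I) = h s := by
    push_cast
    rw [sub_mul, Complex.exp_sub, hθ s, hθ t₀]
  have harg : Complex.exp ((Complex.arg (h s) : ℝ) * Complex.I) = h s := by
    have := Complex.norm_mul_exp_arg_mul_I (h s)
    rwa [hhabs s, Complex.ofReal_one, one_mul] at this
  set d : ℝ := θ s - θ t₀ - Complex.arg (h s) with hd
  have hexp1 : Complex.exp ((d : ℝ) * Complex.I) = 1 := by
    rw [hd]
    push_cast
    rw [sub_mul, Complex.exp_sub]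
    rw [show ((θ s : ℂ) - (θ t₀ : ℂ)) * Complex.I = ((θ s - θ t₀ : ℝ) : ℂ) * Complex.I by push_cast; ring]
    rw [hexp, harg, div_self (hh0 s)]
  obtain ⟨n, hn⟩ := Complex.exp_eq_one_iff.mp hexp1
  have hdn : d = n * (2 * Real.pi) := by
    have hI : ((d : ℂ)) = (n : ℂ) * (2 * Real.pi) := by
      have : ((d : ℂ)) * Complex.I = (n : ℂ) * (2 * Real.pi) * Complex.I := by
        rw [hn]; push_cast; ring
      exact mul_right_cancel₀ Complex.I_ne_zero this
    exact_mod_cast hI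
  have hdb : |d| < 2 * Real.pi := by
    have h1 : |Complex.arg (h s)| ≤ Real.pi := Complex.abs_arg_le_pi _
    have : |d| ≤ |θ s - θ t₀| + |Complex.arg (h s)| := abs_sub _ _
    linarith
  have hn0 : n = 0 := by
    rw [hdn] at hdb
    rw [abs_mul] at hdb
    have h2 : |(2 * Real.pi : ℝ)| = 2 * Real.pi := abs_of_pos (by positivity)
    rw [h2] at hdb
    have : |(n : ℝ)| < 1 := by
      by_contra hcon
      push_neg at hcon
      nlinarith [Real.pi_pos]
    have h3 : -1 < (n : ℝ) ∧ (n : ℝ) < 1 := abs_lt.mp this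
    have h4 : -1 < n ∧ n < 1 := by exact_mod_cast h3
    omega
  have hd0 : d = 0 := by rw [hdn, hn0]; simp
  have : θ s - θ t₀ = Complex.arg (h s) := by
    rw [hd] at hd0; linarith
  rw [Complex.log_im]
  linarith
end

section
/- Let 0 ≤ α < 1 and let ω_α ∈ M_α. Then there exists a constant K > 0 such that for every natural number M ≥ 0, Σ_{m=0}^{M} 2^m·ω_α(2^{−m}) ≤ K·2^M·ω_α(2^{−M}). -/
/-- Iterated subadditivity: `ω (n • t) ≤ n • ω t`. -/
lemma modulus_nat_mul {ω : ℝ → ℝ} (hω : IsModulus ω) (n : ℕ) {t : ℝ} (ht : 0 ≤ t) :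
    ω ((n : ℝ) * t) ≤ (n : ℝ) * ω t := by
  obtain ⟨-, h0, -, hsub⟩ := hω
  induction n with
  | zero => simp [h0]
  | succ n ih =>
      push_cast
      have h1 : ((n : ℝ) + 1) * t = (n : ℝ) * t + t := by ring
      rw [h1]
      have h2 := hsub ((n : ℝ) * t) t (by positivity) ht
      nlinarith

/-- Nonnegativity of a modulus. -/
lemma modulus_nonneg {ω : ℝ → ℝ} (hω : IsModulus ω) {t : ℝ} (ht : 0 ≤ t) : 0 ≤ ω t := by
  obtain ⟨-, h0, hmono, -⟩ := hω
  have := hmono 0 t le_rfl ht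
  linarith [h0 ▸ this]

/-- Almost-monotonicity of `2^m ω(2^{-m})`. -/
lemma modulus_weighted_mono {ω : ℝ → ℝ} (hω : IsModulus ω) {j M : ℕ} (hjM : j ≤ M) :
    (2:ℝ) ^ j * ω (1 / 2 ^ j) ≤ (2:ℝ) ^ M * ω (1 / 2 ^ M) := by
  have key : (1 : ℝ) / 2 ^ j = ((2 ^ (M - j) : ℕ) : ℝ) * (1 / 2 ^ M) := by
    have h : (2:ℝ) ^ (M - j) * 2 ^ j = 2 ^ M := by rw [← pow_add, Nat.sub_add_cancel hjM]
    push_cast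
    field_simp
    linarith
  have h1 : ω (1 / 2 ^ j) ≤ ((2 ^ (M - j) : ℕ) : ℝ) * ω (1 / 2 ^ M) := by
    rw [key]
    exact modulus_nat_mul hω _ (by positivity)
  have h2 : ((2 ^ (M - j) : ℕ) : ℝ) = (2:ℝ) ^ (M - j) := by push_cast; ring
  calc (2:ℝ) ^ j * ω (1 / 2 ^ j) ≤ (2:ℝ) ^ j * ((2:ℝ) ^ (M - j) * ω (1 / 2 ^ M)) := by
        rw [← h2]
        exact mul_le_mul_of_nonneg_left h1 (by positivity)
    _ = (2:ℝ) ^ M * ω (1 / 2 ^ M) := by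
        rw [← mul_assoc, ← pow_add, Nat.add_sub_cancel' hjM]

/-- Geometric sum bound. -/
lemma geom_sum_le_one_sub_inv {r : ℝ} (h0 : 0 ≤ r) (h1 : r < 1) (n : ℕ) :
    ∑ i ∈ Finset.range n, r ^ i ≤ 1 / (1 - r) := by
  rw [geom_sum_eq h1.ne n]
  have hd : (0:ℝ) < 1 - r := by linarith
  have : (r ^ n - 1) / (r - 1) = (1 - r ^ n) / (1 - r) := by
    rw [← neg_div_neg_eq]; ring_nf
  rw [this]
  have hn : (0:ℝ) ≤ r ^ n := pow_nonneg h0 n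
  gcongr
  linarith

/-- For `0 ≤ α < 1` and `ω_α ∈ M_α`:
`Σ_{m=0}^{M} 2^m ω_α(2^{-m}) ≤ K 2^M ω_α(2^{-M})`. -/
theorem geometric_weighted_sum_bound
    (α : ℝ) (hα0 : 0 ≤ α) (hα1 : α < 1)
    (ωα : ℝ → ℝ) (hωα : MemMClass α ωα) :
    ∃ K : ℝ, 0 < K ∧ ∀ M : ℕ,
      ∑ m ∈ Finset.range (M + 1), (2:ℝ) ^ m * ωα (1 / 2 ^ m) ≤
        K * ((2:ℝ) ^ M * ωα (1 / 2 ^ M)) := by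
  obtain ⟨hmod, hgrow, -⟩ := hωα
  set α' : ℝ := (α + 1) / 2 with hα'def
  have hαα' : α < α' := by rw [hα'def]; linarith
  have hα'1 : α' < 1 := by rw [hα'def]; linarith
  obtain ⟨μ, hμ1, hμ⟩ := hgrow α' hαα'
  have hμpos : (0:ℝ) < (μ:ℝ) := by exact_mod_cast hμ1
  -- abbreviation
  set a : ℕ → ℝ := fun m => (2:ℝ) ^ m * ωα (1 / 2 ^ m) with ha
  have ha_nonneg : ∀ m, 0 ≤ a m := fun m => by
    have := modulus_nonneg hmod (t := (1:ℝ) / 2 ^ m) (by positivity)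
    positivity
  -- growth: a (n + μ) ≥ 2 * a n for n ≥ 1
  have hstep : ∀ n : ℕ, 1 ≤ n → 2 * a n ≤ a (n + μ) := by
    intro n hn
    have h := (hμ n hn).le
    have hωnn : 0 ≤ ωα (1 / 2 ^ (n + μ)) := modulus_nonneg hmod (by positivity)
    have hfact : (2:ℝ) ^ ((μ:ℝ) * α') ≤ (2:ℝ) ^ μ := by
      rw [← Real.rpow_natCast 2 μ]
      apply Real.rpow_le_rpow_of_exponent_le (by norm_num)
      nlinarith [hμpos, hα'1, hαα', hα0]
    have key : 2 * ωα (1 / 2 ^ n) ≤ (2:ℝ) ^ μ * ωα (1 / 2 ^ (n + μ)) :=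
      h.trans (mul_le_mul_of_nonneg_right hfact hωnn)
    show 2 * ((2:ℝ) ^ n * ωα (1 / 2 ^ n)) ≤ (2:ℝ) ^ (n + μ) * ωα (1 / 2 ^ (n + μ))
    have e : (2:ℝ) ^ (n + μ) = 2 ^ n * 2 ^ μ := pow_add 2 n μ
    have h2n : (0:ℝ) ≤ (2:ℝ) ^ n := by positivity
    have := mul_le_mul_of_nonneg_left key h2n
    nlinarith
  -- iterate: 2^k * a n ≤ a (n + k * μ)
  have hiter : ∀ k : ℕ, ∀ n : ℕ, 1 ≤ n → (2:ℝ) ^ k * a n ≤ a (n + k * μ) := by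
    intro k
    induction k with
    | zero => intro n hn; simp
    | succ k ih =>
        intro n hn
        have h1 := ih n hn
        have h2 := hstep (n + k * μ) (le_trans hn (Nat.le_add_right _ _))
        have hank : 0 ≤ a n := ha_nonneg n
        calc (2:ℝ) ^ (k+1) * a n = 2 * ((2:ℝ)^k * a n) := by ring
          _ ≤ 2 * a (n + k * μ) := by linarith [h1]
          _ ≤ a (n + k * μ + μ) := h2
          _ = a (n + (k+1) * μ) := by ring_nf
  set r : ℝ := (2:ℝ) ^ (-(1:ℝ)/(μ:ℝ)) with hrdef
  have hr0 : 0 < r := Real.rpow_pos_of_pos (by norm_num) _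
  have hr1 : r < 1 := by
    apply Real.rpow_lt_one_of_one_lt_of_neg (by norm_num)
    rw [div_neg_iff]; right; constructor <;> [norm_num; exact hμpos]
  -- per-term bound for 1 ≤ m ≤ M
  have hterm : ∀ M m : ℕ, 1 ≤ m → m ≤ M → a m ≤ 2 * r ^ (M - m) * a M := by
    intro M m hm1 hmM
    set k : ℕ := (M - m) / μ with hk
    have hkμ : k * μ ≤ M - m := Nat.div_mul_le_self _ _
    have hle : m + k * μ ≤ M := by omega
    have h1 : (2:ℝ) ^ k * a m ≤ a (m + k * μ) := hiter k m hm1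
    have h2 : a (m + k * μ) ≤ a M := modulus_weighted_mono hmod hle
    have h3 : a m ≤ ((2:ℝ) ^ k)⁻¹ * a M := by
      rw [inv_mul_eq_div, le_div_iff₀ (by positivity)]
      calc a m * (2:ℝ)^k = (2:ℝ)^k * a m := by ring
        _ ≤ a M := h1.trans h2
    -- (2^k)⁻¹ ≤ 2 * r^(M-m)
    have hfloor : (M - m : ℕ) < (k + 1) * μ :=
      (Nat.div_lt_iff_lt_mul (by omega : 0 < μ)).mp (Nat.lt_succ_self k)
    have hfloorR : ((M - m : ℕ) : ℝ) < ((k:ℝ) + 1) * (μ:ℝ) := by exact_mod_cast hfloor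
    have hexp : -(k:ℝ) ≤ 1 + (-(1:ℝ)/(μ:ℝ)) * ((M - m : ℕ) : ℝ) := by
      have hdiv : ((M - m : ℕ) : ℝ) / (μ:ℝ) ≤ (k:ℝ) + 1 := by
        rw [div_le_iff₀ hμpos]; nlinarith [hfloorR]
      have heq : (-(1:ℝ)/(μ:ℝ)) * ((M - m : ℕ) : ℝ) = -(((M - m : ℕ) : ℝ) / (μ:ℝ)) := by ring
      rw [heq]; linarith
    have h4 : ((2:ℝ) ^ k)⁻¹ ≤ 2 * r ^ (M - m) := by
      have e1 : ((2:ℝ) ^ k)⁻¹ = (2:ℝ) ^ (-(k:ℝ)) := by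
        rw [Real.rpow_neg (by norm_num), Real.rpow_natCast]
      have e2 : 2 * r ^ (M - m) = (2:ℝ) ^ (1 + (-(1:ℝ)/(μ:ℝ)) * ((M - m : ℕ) : ℝ)) := by
        rw [Real.rpow_add (by norm_num), Real.rpow_one, hrdef,
          ← Real.rpow_natCast ((2:ℝ) ^ (-(1:ℝ)/(μ:ℝ))) (M - m),
          ← Real.rpow_mul (by norm_num)]
      rw [e1, e2]
      exact Real.rpow_le_rpow_of_exponent_le (by norm_num) hexp
    calc a m ≤ ((2:ℝ) ^ k)⁻¹ * a M := h3
      _ ≤ 2 * r ^ (M - m) * a M := mul_le_mul_of_nonneg_right h4 (ha_nonneg M)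
  have h1r : (0:ℝ) < 1 - r := by linarith
  refine ⟨1 + 2 * (1 / (1 - r)), by positivity, fun M => ?_⟩
  have hsum1 : ∑ m ∈ Finset.range (M + 1), a m
      = a 0 + ∑ m ∈ Finset.Ico 1 (M + 1), a m := by
    rw [Finset.range_eq_Ico, ← Finset.sum_eq_sum_Ico_succ_bot (by omega : 0 < M + 1)]
  have hbound2 : ∑ m ∈ Finset.Ico 1 (M + 1), a m
      ≤ ∑ m ∈ Finset.Ico 1 (M + 1), 2 * r ^ (M - m) * a M := by
    apply Finset.sum_le_sum
    intro m hm
    rw [Finset.mem_Ico] at hm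
    exact hterm M m hm.1 (by omega)
  have hbound3 : ∑ m ∈ Finset.Ico 1 (M + 1), 2 * r ^ (M - m) * a M
      ≤ 2 * (1 / (1 - r)) * a M := by
    have hsum_geo : ∑ m ∈ Finset.Ico 1 (M + 1), r ^ (M - m) ≤ 1 / (1 - r) := by
      calc ∑ m ∈ Finset.Ico 1 (M + 1), r ^ (M - m)
          ≤ ∑ m ∈ Finset.range (M + 1), r ^ (M - m) := by
            rw [Finset.range_eq_Ico]
            apply Finset.sum_le_sum_of_subset_of_nonneg
            · exact Finset.Ico_subset_Ico (by omega) le_rfl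
            · intro i _ _; positivity
        _ = ∑ j ∈ Finset.range (M + 1), r ^ j := by
            rw [← Finset.sum_range_reflect]
            apply Finset.sum_congr rfl
            intro j hj
            rw [Finset.mem_range] at hj
            congr 1
            omega
        _ ≤ 1 / (1 - r) := geom_sum_le_one_sub_inv hr0.le hr1 (M + 1)
    calc ∑ m ∈ Finset.Ico 1 (M + 1), 2 * r ^ (M - m) * a M
        = 2 * a M * ∑ m ∈ Finset.Ico 1 (M + 1), r ^ (M - m) := by
          rw [Finset.mul_sum]
          exact Finset.sum_congr rfl fun m _ => by ring
      _ ≤ 2 * a M * (1 / (1 - r)) := by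
          apply mul_le_mul_of_nonneg_left hsum_geo
          have := ha_nonneg M; linarith
      _ = 2 * (1 / (1 - r)) * a M := by ring
  have ha0M : a 0 ≤ a M := modulus_weighted_mono hmod (Nat.zero_le M)
  calc ∑ m ∈ Finset.range (M + 1), a m = a 0 + ∑ m ∈ Finset.Ico 1 (M + 1), a m := hsum1
    _ ≤ a M + 2 * (1 / (1 - r)) * a M := by linarith [hbound2.trans hbound3]
    _ = (1 + 2 * (1 / (1 - r))) * a M := by ring
end

section
/- Let 0 < β ≤ 1 and let ω_β ∈ M_β with ω_β(t) > 0 for t > 0. Then there exists a constant K > 0 such that for every natural number M ≥ 0, Σ_{m=0}^{M} 2^{−mβ/2}·(ω_β(2^{−m}))^{−1} ≤ K·2^{−Mβ/2}·(ω_β(2^{−M}))^{−1}. -/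
/-- For `0 < β ≤ 1` and `ω_β ∈ M_β` positive on positives:
`Σ_{m=0}^{M} 2^{-mβ/2} (ω_β(2^{-m}))⁻¹ ≤ K 2^{-Mβ/2} (ω_β(2^{-M}))⁻¹`. -/
theorem inverse_weighted_sum_bound
    (β : ℝ) (hβ0 : 0 < β) (hβ1 : β ≤ 1)
    (ωβ : ℝ → ℝ) (hωβ : MemMClass β ωβ)
    (hωβpos : ∀ t : ℝ, 0 < t → 0 < ωβ t) :
    ∃ K : ℝ, 0 < K ∧ ∀ M : ℕ,
      ∑ m ∈ Finset.range (M + 1), (2:ℝ) ^ (-(m:ℝ) * β / 2) * (ωβ (1 / 2 ^ m))⁻¹ ≤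
        K * ((2:ℝ) ^ (-(M:ℝ) * β / 2) * (ωβ (1 / 2 ^ M))⁻¹) := by
  obtain ⟨⟨_, _, hmono, _⟩, _, hiii⟩ := hωβ
  set a : ℕ → ℝ := fun m => (2:ℝ) ^ (-(m:ℝ) * β / 2) * (ωβ (1 / 2 ^ m))⁻¹ with ha
  have hωm : ∀ m : ℕ, 0 < ωβ (1 / 2 ^ m) := fun m => hωβpos _ (by positivity)
  have hapos : ∀ m, 0 < a m := fun m => by
    have := hωm m
    simp only [ha]
    positivity
  -- choose ν with ν*β ≥ 4
  set ν : ℕ := ⌈(4:ℝ)/β⌉₊ with hνdef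
  have hν1 : 1 ≤ ν := by
    have h4 : (4:ℝ) ≤ 4/β := by
      rw [le_div_iff₀ hβ0]; nlinarith
    have : (1:ℝ) ≤ 4/β := by linarith
    exact Nat.one_le_ceil_iff.mpr (by linarith)
  have hνβ : 4 ≤ (ν:ℝ) * β := by
    have h1 : (4:ℝ)/β ≤ (ν:ℝ) := Nat.le_ceil _
    calc (4:ℝ) = (4/β) * β := by field_simp
    _ ≤ (ν:ℝ) * β := by nlinarith
  obtain ⟨N, hN⟩ := hiii ν hν1
  -- growth lemma
  have hgrow : ∀ n : ℕ, N < n → a n ≤ (1/2) * a (n + ν) := by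
    intro n hn
    have hkey := hN n hn
    set x := ωβ (1 / 2 ^ n) with hx
    set y := ωβ (1 / 2 ^ (n + ν)) with hy
    have hx0 : 0 < x := hωm n
    have hy0 : 0 < y := hωm (n + ν)
    -- from hkey : 2^(νβ) y < 2 x, get 2*y ≤ 2^(-(νβ/2)) * x
    have hpow : (0:ℝ) < (2:ℝ) ^ ((ν:ℝ) * β) := by positivity
    have h2 : y < 2 * x / (2:ℝ) ^ ((ν:ℝ) * β) := by
      rw [lt_div_iff₀ hpow]; nlinarith [hkey]
    have hsplit : (2:ℝ) ^ ((ν:ℝ) * β) = (2:ℝ) ^ ((ν:ℝ) * β / 2) * (2:ℝ) ^ ((ν:ℝ) * β / 2) := by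
      rw [← Real.rpow_add two_pos]; ring_nf
    have hbig : (4:ℝ) ≤ (2:ℝ) ^ ((ν:ℝ) * β / 2) := by
      calc (4:ℝ) = (2:ℝ) ^ (2:ℝ) := by
            rw [show (2:ℝ) = ((2:ℕ):ℝ) from rfl, Real.rpow_natCast]; norm_num
      _ ≤ (2:ℝ) ^ ((ν:ℝ) * β / 2) := by
            apply Real.rpow_le_rpow_of_exponent_le one_le_two; linarith
    have hp0 : (0:ℝ) < (2:ℝ) ^ ((ν:ℝ) * β / 2) := by positivity
    have hkey2 : 2 * y ≤ x / (2:ℝ) ^ ((ν:ℝ) * β / 2) := by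
      rw [le_div_iff₀ hp0]
      have : y * (2:ℝ) ^ ((ν:ℝ) * β) < 2 * x := by nlinarith [hkey]
      nlinarith [this, hsplit, hbig, hy0.le, hp0]
    -- now conclude
    have hneg : (2:ℝ) ^ (-((n:ℝ) + ν) * β / 2) =
        (2:ℝ) ^ (-(n:ℝ) * β / 2) / (2:ℝ) ^ ((ν:ℝ) * β / 2) := by
      rw [eq_div_iff (ne_of_gt hp0), ← Real.rpow_add two_pos]; ring_nf
    simp only [ha]
    push_cast
    rw [hneg, ← hx, ← hy]
    have h3 : 2 * y * (2:ℝ) ^ ((ν:ℝ) * β / 2) ≤ x := (le_div_iff₀ hp0).mp hkey2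
    have h4 : x⁻¹ ≤ (2 * y * (2:ℝ) ^ ((ν:ℝ) * β / 2))⁻¹ := inv_anti₀ (by positivity) h3
    calc (2:ℝ) ^ (-(n:ℝ) * β / 2) * x⁻¹
        ≤ (2:ℝ) ^ (-(n:ℝ) * β / 2) * (2 * y * (2:ℝ) ^ ((ν:ℝ) * β / 2))⁻¹ :=
          mul_le_mul_of_nonneg_left h4 (by positivity)
      _ = 1 / 2 * ((2:ℝ) ^ (-(n:ℝ) * β / 2) / (2:ℝ) ^ ((ν:ℝ) * β / 2) * y⁻¹) := by
          rw [mul_inv, mul_inv, div_eq_mul_inv]; ring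
  -- mild decrease: for j ≤ M ≤ j + ν, a j ≤ C * a M
  set C : ℝ := (2:ℝ) ^ ((ν:ℝ) * β / 2) with hC
  have hC0 : 0 < C := by positivity
  have hmild : ∀ j M : ℕ, j ≤ M → M ≤ j + ν → a j ≤ C * a M := by
    intro j M hjM hMjν
    have hωle : ωβ (1 / 2 ^ M) ≤ ωβ (1 / 2 ^ j) := by
      apply hmono _ _ (by positivity)
      apply div_le_div_of_nonneg_left one_pos.le (by positivity)
      exact pow_le_pow_right₀ one_le_two hjM
    have hinv : (ωβ (1 / 2 ^ j))⁻¹ ≤ (ωβ (1 / 2 ^ M))⁻¹ :=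
      inv_anti₀ (hωm M) hωle
    have hexp : (2:ℝ) ^ (-(j:ℝ) * β / 2) ≤ C * (2:ℝ) ^ (-(M:ℝ) * β / 2) := by
      rw [hC, ← Real.rpow_add two_pos]
      apply Real.rpow_le_rpow_of_exponent_le one_le_two
      have h1 : (M:ℝ) ≤ (j:ℝ) + ν := by exact_mod_cast hMjν
      nlinarith
    calc a j = (2:ℝ) ^ (-(j:ℝ) * β / 2) * (ωβ (1 / 2 ^ j))⁻¹ := rfl
      _ ≤ (C * (2:ℝ) ^ (-(M:ℝ) * β / 2)) * (ωβ (1 / 2 ^ M))⁻¹ := by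
          apply mul_le_mul hexp hinv (inv_nonneg.mpr (hωm j).le)
          positivity
      _ = C * a M := by ring
  -- constants
  have hne : (Finset.range (N + ν + 1)).Nonempty := ⟨0, by simp⟩
  set c : ℝ := (Finset.range (N + ν + 1)).inf' hne a with hc
  have hc0 : 0 < c := by
    obtain ⟨i, _, hi⟩ := Finset.exists_mem_eq_inf' hne a
    rw [hc, hi]; exact hapos i
  have hcle : ∀ M, M ≤ N + ν → c ≤ a M := fun M hM =>
    Finset.inf'_le a (Finset.mem_range.mpr (by omega))
  set B : ℝ := ∑ m ∈ Finset.range (N + ν + 1), a m with hB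
  have hB0 : 0 < B := Finset.sum_pos (fun i _ => hapos i) hne
  set K : ℝ := max (B / c) (2 * ν * C) with hK
  have hK0 : 0 < K := lt_max_of_lt_left (by positivity)
  refine ⟨K, hK0, ?_⟩
  -- main claim by strong induction
  have main : ∀ M : ℕ, c ≤ a M ∧ ∑ m ∈ Finset.range (M + 1), a m ≤ K * a M := by
    intro M
    induction M using Nat.strong_induction_on with
    | _ M ih =>
      by_cases hcase : M ≤ N + ν
      · refine ⟨hcle M hcase, ?_⟩
        have hsub : ∑ m ∈ Finset.range (M + 1), a m ≤ B := by
          apply Finset.sum_le_sum_of_subset_of_nonneg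
          · exact Finset.range_subset_range.mpr (by omega)
          · intro i _ _; exact (hapos i).le
        calc ∑ m ∈ Finset.range (M + 1), a m ≤ B := hsub
          _ = (B / c) * c := by field_simp
          _ ≤ K * a M := by
              apply mul_le_mul (le_max_left _ _) (hcle M hcase) hc0.le hK0.le
      · push_neg at hcase
        set M' : ℕ := M - ν with hM'
        have hM'lt : M' < M := by omega
        have hM'N : N < M' := by omega
        have hM'ν : M' + ν = M := by omega
        obtain ⟨ihc, ihS⟩ := ih M' hM'lt
        have hgr : a M' ≤ (1/2) * a M := by
          have := hgrow M' hM'N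
          rwa [hM'ν] at this
        have haM : c ≤ a M := le_trans ihc (by nlinarith [hapos M])
        refine ⟨haM, ?_⟩
        have hsplit : ∑ m ∈ Finset.range (M + 1), a m =
            ∑ m ∈ Finset.range (M' + 1), a m + ∑ m ∈ Finset.Ico (M' + 1) (M + 1), a m := by
          simp only [Finset.range_eq_Ico]
          exact (Finset.sum_Ico_consecutive a (by omega) (by omega)).symm
        have htail : ∑ m ∈ Finset.Ico (M' + 1) (M + 1), a m ≤ (ν : ℝ) * (C * a M) := by
          have : ∑ m ∈ Finset.Ico (M' + 1) (M + 1), a m ≤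
              ∑ _m ∈ Finset.Ico (M' + 1) (M + 1), C * a M := by
            apply Finset.sum_le_sum
            intro i hi
            rw [Finset.mem_Ico] at hi
            exact hmild i M (by omega) (by omega)
          simpa [Nat.card_Ico, show M + 1 - (M' + 1) = ν by omega] using this
        have hνC : (ν : ℝ) * C ≤ K / 2 := by
          have : 2 * ν * C ≤ K := le_max_right _ _
          linarith
        calc ∑ m ∈ Finset.range (M + 1), a m
            = ∑ m ∈ Finset.range (M' + 1), a m + ∑ m ∈ Finset.Ico (M' + 1) (M + 1), a m := hsplit
          _ ≤ K * a M' + (ν : ℝ) * (C * a M) := add_le_add ihS htail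
          _ ≤ K * ((1/2) * a M) + (K/2) * a M := by
              have h1 : K * a M' ≤ K * ((1/2) * a M) := mul_le_mul_of_nonneg_left hgr hK0.le
              have h2 : (ν : ℝ) * (C * a M) ≤ (K/2) * a M := by
                nlinarith [mul_le_mul_of_nonneg_right hνC (hapos M).le]
              linarith
          _ = K * a M := by ring
  intro M
  exact (main M).2
end
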